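/- arXiv:2108.08661 — 5 statements merged into one kernel-verified Lean document; each statement's English description precedes it below -/
import Mathlib

section
/- The number of parking functions of size n is (n+1)^(n-1). -/
open Finset

/-- A parking function of size `n`, encoded as `f : Fin n → Fin n` (so value `f j`
represents the parking place `(f j : ℕ) + 1 ∈ {1,…,n}`): its nondecreasing
rearrangement `f'` satisfies `f' i ≤ i`, equivalently for every `i`, at least `i + 1`
of the values are `≤ i`. -/
def IsParkingFun (n : ℕ) (f : Fin n → Fin n) : Prop :=
  ∀ i : Fin n, (i : ℕ) + 1 ≤ (Finset.univ.filter (fun j => f j ≤ i)).card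

namespace ParkAux

variable {n : ℕ}
def q (g : Fin n → ZMod (n+1)) (t : ℕ) : ℕ :=
  (Finset.univ.filter (fun j => g j = (t : ZMod (n+1)))).card

lemma val_eq_iff {t : ℕ} (ht : t < n+1) (a : ZMod (n+1)) : a.val = t ↔ a = (t : ZMod (n+1)) := by
  constructor
  · intro h; rw [← h]; exact (ZMod.natCast_rightInverse a).symm
  · intro h; rw [h, ZMod.val_cast_of_lt ht]

lemma sum_q_range (g : Fin n → ZMod (n+1)) :
    ∑ t ∈ Finset.range (n+1), q g t = n := by
  have h := Finset.card_eq_sum_card_fiberwise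
    (f := fun j : Fin n => (g j).val) (s := univ) (t := Finset.range (n+1))
    (fun j _ => Finset.mem_range.mpr (ZMod.val_lt _))
  rw [Finset.card_univ, Fintype.card_fin] at h
  conv_rhs => rw [h]
  refine Finset.sum_congr rfl fun t ht => ?_
  unfold q
  congr 1
  ext j
  simp [val_eq_iff (Finset.mem_range.mp ht)]

lemma q_periodic (g : Fin n → ZMod (n+1)) (t : ℕ) : q g (t + (n+1)) = q g t := by
  unfold q; congr 1; ext j; simp

lemma sum_q_window (g : Fin n → ZMod (n+1)) (v : ℕ) :
    ∑ t ∈ Finset.Ico v (v + (n+1)), q g t = n := by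
  induction v with
  | zero => simpa using sum_q_range g
  | succ v ih =>
    have e : v + 1 + (n+1) = (v + (n+1)) + 1 := by omega
    have h1 : ∑ t ∈ Finset.Ico (v+1) (v+1+(n+1)), q g t
        = (∑ t ∈ Finset.Ico (v+1) (v+(n+1)), q g t) + q g (v+(n+1)) := by
      rw [e, Finset.sum_Ico_succ_top (by omega)]
    have h2 : ∑ t ∈ Finset.Ico v (v+(n+1)), q g t
        = q g v + ∑ t ∈ Finset.Ico (v+1) (v+(n+1)), q g t :=
      Finset.sum_eq_sum_Ico_succ_bot (by omega) _
    rw [h1, q_periodic]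
    omega

lemma count_shift (g : Fin n → ZMod (n+1)) (c : ZMod (n+1)) (k : ℕ) (hk : k ≤ n) :
    (Finset.univ.filter (fun j => (g j + c).val ≤ k)).card
      = ∑ t ∈ Finset.Ico (-c : ZMod (n+1)).val ((-c : ZMod (n+1)).val + k + 1), q g t := by
  set s : ZMod (n+1) := -c with hs
  set u := s.val with hu
  have hus : ((u : ℕ) : ZMod (n+1)) = s := ZMod.natCast_rightInverse s
  have hcs : c = -s := by rw [hs, neg_neg]
  have h := Finset.card_eq_sum_card_fiberwise
    (f := fun j : Fin n => u + (g j + c).val)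
    (s := Finset.univ.filter (fun j => (g j + c).val ≤ k))
    (t := Finset.Ico u (u + k + 1))
    (fun j hj => by
      simp only [Finset.mem_coe, Finset.mem_filter] at hj
      simp only [Finset.mem_coe, Finset.mem_Ico]
      omega)
  rw [h]
  refine Finset.sum_congr rfl fun t ht => ?_
  obtain ⟨ht1, ht2⟩ := Finset.mem_Ico.mp ht
  unfold q
  congr 1
  rw [Finset.filter_filter]
  ext j
  simp only [Finset.mem_filter, Finset.mem_univ, true_and]
  constructor
  · rintro ⟨h1, h2⟩
    have : g j = ((u + (g j + c).val : ℕ) : ZMod (n+1)) := by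
      push_cast
      rw [hus, ZMod.natCast_val, ZMod.cast_id, hcs]
      ring
    rw [this, h2]
  · intro hgj
    have hval : (g j + c).val = t - u := by
      have h3 : g j + c = ((t - u : ℕ) : ZMod (n+1)) := by
        rw [hgj, hcs]
        have h4 : (t : ZMod (n+1)) = ((u + (t-u) : ℕ) : ZMod (n+1)) := by
          congr 1; omega
        rw [h4]
        push_cast [hus]
        ring
      rw [h3, ZMod.val_cast_of_lt (by omega)]
    constructor <;> omega

def F (g : Fin n → ZMod (n+1)) (v : ℕ) : ℤ :=
  (∑ t ∈ Finset.range v, (q g t : ℤ)) - v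

lemma F_zero (g : Fin n → ZMod (n+1)) : F g 0 = 0 := by simp [F]

lemma F_shift (g : Fin n → ZMod (n+1)) (v : ℕ) : F g (v + (n+1)) = F g v - 1 := by
  have h := Finset.sum_Ico_consecutive (f := fun t => (q g t : ℤ))
    (Nat.zero_le v) (Nat.le_add_right v (n+1))
  have hw : (∑ t ∈ Finset.Ico v (v+(n+1)), (q g t : ℤ)) = n := by
    rw [← Nat.cast_sum, sum_q_window g v]
  unfold F
  rw [Finset.range_eq_Ico, Finset.range_eq_Ico, ← h, hw]
  push_cast
  ring

def Good (g : Fin n → ZMod (n+1)) (u : ℕ) : Prop :=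
  ∀ k < n, (k : ℕ) + 1 ≤ ∑ t ∈ Finset.Ico u (u + k + 1), q g t

lemma sum_Ico_F (g : Fin n → ZMod (n+1)) (u k : ℕ) :
    (∑ t ∈ Finset.Ico u (u + k + 1), (q g t : ℤ))
      = F g (u + k + 1) - F g u + (k + 1) := by
  have h := Finset.sum_Ico_consecutive (f := fun t => (q g t : ℤ))
    (Nat.zero_le u) (by omega : u ≤ u + k + 1)
  unfold F
  rw [Finset.range_eq_Ico, Finset.range_eq_Ico, ← h]
  push_cast
  ring

lemma good_iff (g : Fin n → ZMod (n+1)) (u : ℕ) :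
    Good g u ↔ ∀ k < n, F g u ≤ F g (u + k + 1) := by
  unfold Good
  refine forall_congr' fun k => imp_congr_right fun hk => ?_
  have hS := sum_Ico_F g u k
  constructor
  · intro h
    have h2 : ((k:ℤ)+1) ≤ ∑ t ∈ Finset.Ico u (u+k+1), (q g t : ℤ) := by
      rw [← Nat.cast_sum]; exact_mod_cast h
    linarith
  · intro h
    have h2 : ((k:ℤ)+1) ≤ ∑ t ∈ Finset.Ico u (u+k+1), (q g t : ℤ) := by linarith
    rw [← Nat.cast_sum] at h2
    exact_mod_cast h2

lemma F_top (g : Fin n → ZMod (n+1)) : F g (n+1) = -1 := by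
  have := F_shift g 0
  simpa [F_zero] using this

lemma good_exists (g : Fin n → ZMod (n+1)) (hn : 1 ≤ n) : ∃ u ≤ n, Good g u := by
  have hP : ∃ v, v ≤ n+1 ∧ ∀ w ≤ n+1, F g v ≤ F g w := by
    obtain ⟨v, hv, hmin⟩ := Finset.exists_min_image (Finset.range (n+2)) (F g)
      ⟨0, Finset.mem_range.mpr (by omega)⟩
    exact ⟨v, by have := Finset.mem_range.mp hv; omega,
      fun w hw => hmin w (Finset.mem_range.mpr (by omega))⟩
  classical
  set u' := Nat.find hP with hu'def
  obtain ⟨hu'le, hu'min⟩ := Nat.find_spec hP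
  have hstrict : ∀ w < u', F g u' + 1 ≤ F g w := by
    intro w hw
    have hnot := Nat.find_min hP hw
    push_neg at hnot
    have hwle : w ≤ n+1 := by omega
    obtain ⟨w', hw'le, hw'⟩ := hnot hwle
    have h1 : F g u' ≤ F g w := hu'min w hwle
    have h2 : F g u' ≤ F g w' := hu'min w' hw'le
    omega
  have hneg : F g u' ≤ -1 := by
    have := hu'min (n+1) (le_refl _)
    rw [F_top] at this
    exact this
  have hu'pos : 1 ≤ u' := by
    by_contra h
    have : u' = 0 := by omega
    rw [this, F_zero] at hneg
    omega
  by_cases hcase : u' = n + 1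
  · refine ⟨0, by omega, (good_iff g 0).mpr fun k hk => ?_⟩
    rw [F_zero]
    have h1 := hstrict (0 + k + 1) (by omega)
    have h3 : F g u' = -1 := by rw [hcase, F_top]
    omega
  · refine ⟨u', by omega, (good_iff g u').mpr fun k hk => ?_⟩
    by_cases hv : u' + k + 1 ≤ n + 1
    · exact hu'min _ hv
    · have hvs : (u' + k + 1 - (n+1)) + (n+1) = u' + k + 1 := by omega
      have h1 := F_shift g (u' + k + 1 - (n+1))
      rw [hvs] at h1
      have h2 := hstrict (u' + k + 1 - (n+1)) (by omega)
      omega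

lemma good_unique_aux (g : Fin n → ZMod (n+1)) (u u' : ℕ) (hu' : u' ≤ n)
    (hlt : u < u') (h : Good g u) (h' : Good g u') : False := by
  rw [good_iff] at h h'
  have h1 := h (u' - u - 1) (by omega)
  have e1 : u + (u' - u - 1) + 1 = u' := by omega
  rw [e1] at h1
  have h2 := h' (u + n - u') (by omega)
  have e2 : u' + (u + n - u') + 1 = u + (n + 1) := by omega
  rw [e2, F_shift] at h2
  omega

lemma good_unique (g : Fin n → ZMod (n+1)) (u u' : ℕ) (hu : u ≤ n) (hu' : u' ≤ n)
    (h : Good g u) (h' : Good g u') : u = u' := by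
  rcases lt_trichotomy u u' with hlt | heq | hgt
  · exact absurd (good_unique_aux g u u' hu' hlt h h') (by simp)
  · exact heq
  · exact absurd (good_unique_aux g u' u hu hgt h' h) (by simp)

def Park (n : ℕ) (g : Fin n → ZMod (n+1)) : Prop :=
  ∀ k < n, k + 1 ≤ (Finset.univ.filter (fun j => (g j).val ≤ k)).card

lemma park_iff_good (g : Fin n → ZMod (n+1)) (c : ZMod (n+1)) :
    Park n (fun j => g j + c) ↔ Good g (-c : ZMod (n+1)).val := by
  unfold Park Good
  refine forall_congr' fun k => imp_congr_right fun hk => ?_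
  rw [count_shift g c k (by omega)]

lemma existsUnique_shift (g : Fin n → ZMod (n+1)) (hn : 1 ≤ n) :
    ∃! c : ZMod (n+1), Park n (fun j => g j + c) := by
  obtain ⟨u, hu, hgood⟩ := good_exists g hn
  refine ⟨-(u : ZMod (n+1)), ?_, ?_⟩
  · show Park n (fun j => g j + -(u : ZMod (n+1)))
    rw [park_iff_good]
    have h : (-(-(u:ZMod (n+1)))).val = u := by
      rw [neg_neg, ZMod.val_cast_of_lt (by omega)]
    rwa [h]
  · intro c hc
    replace hc : Park n (fun j => g j + c) := hc
    rw [park_iff_good] at hc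
    have h1 : (-c).val ≤ n := by have := ZMod.val_lt (-c); omega
    have h2 : (-c).val = u := good_unique g _ _ h1 hu hc hgood
    have h3 : (-c) = (u : ZMod (n+1)) := by
      rw [← h2]; exact (ZMod.natCast_rightInverse _).symm
    rw [← h3, neg_neg]

lemma park_lt (g : Fin n → ZMod (n+1)) (hg : Park n g) (hn : 1 ≤ n) (j : Fin n) :
    (g j).val < n := by
  have h := hg (n-1) (by omega)
  have hle : (Finset.univ.filter (fun j => (g j).val ≤ n-1)).card ≤ n := by
    calc _ ≤ (Finset.univ : Finset (Fin n)).card := Finset.card_filter_le _ _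
    _ = n := by simp
  have heq : (Finset.univ.filter (fun j => (g j).val ≤ n-1)) = Finset.univ := by
    apply Finset.eq_univ_of_card
    simp only [Finset.card_univ, Fintype.card_fin]
    omega
  have := heq ▸ Finset.mem_univ j
  have := (Finset.mem_filter.mp this).2
  omega

noncomputable def e1 (hn : 1 ≤ n) :
    {f : Fin n → Fin n // IsParkingFun n f} ≃ {g : Fin n → ZMod (n+1) // Park n g} where
  toFun := fun ⟨f, hf⟩ => ⟨fun j => ((f j : ℕ) : ZMod (n+1)), by
    intro k hk
    have h := hf ⟨k, hk⟩
    have heq : (Finset.univ.filter (fun j => (((f j : ℕ) : ZMod (n+1))).val ≤ k))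
        = Finset.univ.filter (fun j => f j ≤ (⟨k, hk⟩ : Fin n)) := by
      ext j
      have : (((f j : ℕ) : ZMod (n+1))).val = (f j : ℕ) :=
        ZMod.val_cast_of_lt (by have := (f j).isLt; omega)
      simp only [Finset.mem_filter, Finset.mem_univ, true_and]
      rw [this, Fin.le_def]
    rw [heq]
    exact h⟩
  invFun := fun ⟨g, hg⟩ => ⟨fun j => ⟨(g j).val, park_lt g hg hn j⟩, by
    intro i
    have h := hg (i : ℕ) i.isLt
    have heq : (Finset.univ.filter (fun j => (⟨(g j).val, park_lt g hg hn j⟩ : Fin n) ≤ i))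
        = Finset.univ.filter (fun j => (g j).val ≤ (i : ℕ)) := by
      ext j
      simp [Fin.le_def]
    rw [heq]
    exact h⟩
  left_inv := fun ⟨f, hf⟩ => Subtype.ext (funext fun j => Fin.ext (by
    simp [ZMod.val_cast_of_lt (show (f j : ℕ) < n+1 by have := (f j).isLt; omega)]))
  right_inv := fun ⟨g, hg⟩ => Subtype.ext (funext fun j => by
    simp only
    exact ZMod.natCast_rightInverse _)

noncomputable def e2 (hn : 1 ≤ n) :
    ZMod (n+1) × {g : Fin n → ZMod (n+1) // Park n g} ≃ (Fin n → ZMod (n+1)) :=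
  Equiv.ofBijective (fun p => fun j => p.2.1 j + p.1) (by
    constructor
    · rintro ⟨c, g, hg⟩ ⟨c', g', hg'⟩ h
      simp only at h
      have hgj : ∀ j, g' j = g j + (c - c') := by
        intro j
        have h1 := congrFun h j
        linear_combination -h1
      have hP0 : Park n (fun j => g j + 0) := by simpa using hg
      have hP1 : Park n (fun j => g j + (c - c')) := by
        have : (fun j => g j + (c - c')) = g' := funext fun j => (hgj j).symm
        rw [this]; exact hg'
      obtain ⟨c₀, -, huniq⟩ := existsUnique_shift g hn
      have h0 := huniq 0 hP0
      have h1 := huniq (c - c') hP1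
      have hcc : c = c' := by
        have : c - c' = 0 := h1.trans h0.symm
        have := sub_eq_zero.mp this
        exact this
      subst hcc
      have hgg : g = g' := funext fun j => by
        have := congrFun h j
        exact add_right_cancel this
      subst hgg
      rfl
    · intro G
      obtain ⟨c, hc, -⟩ := existsUnique_shift G hn
      replace hc : Park n (fun j => G j + c) := hc
      exact ⟨⟨-c, ⟨fun j => G j + c, hc⟩⟩, by funext j; simp⟩)

end ParkAux

open ParkAux in
/-- The number of parking functions of size `n` is `(n+1)^(n-1)`. -/
theorem card_parking_functions (n : ℕ) (hn : 1 ≤ n) :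
    Nat.card {f : Fin n → Fin n // IsParkingFun n f} = (n + 1) ^ (n - 1) := by
  have h1 : Nat.card {f : Fin n → Fin n // IsParkingFun n f}
      = Nat.card {g : Fin n → ZMod (n+1) // Park n g} := Nat.card_congr (e1 hn)
  have h2 := Nat.card_congr (e2 (n := n) hn)
  rw [Nat.card_prod] at h2
  have hz : Nat.card (ZMod (n+1)) = n+1 := by
    simp [Nat.card_eq_fintype_card, ZMod.card]
  have hf : Nat.card (Fin n → ZMod (n+1)) = (n+1)^n := by
    simp [Nat.card_eq_fintype_card, ZMod.card]
  rw [hz, hf] at h2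
  have hpow : (n+1) * (n+1)^(n-1) = (n+1)^n := by
    rw [← pow_succ']
    congr 1
    omega
  rw [h1]
  exact Nat.eq_of_mul_eq_mul_left (by omega) (h2.trans hpow.symm)
end

section
/- Let ξ_1,...,ξ_n be i.i.d. random variables taking values in ℕ ∪ {−1}, let S_j = ξ_1 + ... + ξ_j, and let F: ℝⁿ → [0,∞) be a measurable function invariant under cyclic shifts of its arguments. Then E[F(ξ_1,...,ξ_n) · 1_{S_1 > 0, ..., S_n > 0}] ≤ (1/n) · E[F(ξ_1,...,ξ_n) · min(S_n, n) · 1_{S_n > 0}]. -/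
open MeasureTheory ProbabilityTheory Finset
open Fin.NatCast



/-- the shift-`i` positivity condition -/
def goodShift (n : ℕ) [NeZero n] (x : Fin n → ℤ) (i : Fin n) : Prop :=
  ∀ k ∈ Finset.Icc 1 n, 0 < ∑ l ∈ Finset.range k, x ((l : Fin n) + i)

instance goodShift.dec (n : ℕ) [NeZero n] (x : Fin n → ℤ) : DecidablePred (goodShift n x) :=
  fun _ => by unfold goodShift; exact Finset.decidableDforallFinset

lemma partial_shift (n : ℕ) [NeZero n] (x : Fin n → ℤ) (j k : ℕ) :
    ∑ l ∈ Finset.range k, x ((l : Fin n) + (j : Fin n))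
      = (∑ l ∈ Finset.range (j + k), x (l : Fin n))
        - ∑ l ∈ Finset.range j, x (l : Fin n) := by
  rw [Finset.sum_range_add (fun l => x (l : Fin n)) j k]
  rw [add_sub_cancel_left]
  exact Finset.sum_congr rfl fun l _ => by push_cast; rw [add_comm]

lemma block_sum (n : ℕ) [NeZero n] (x : Fin n → ℤ) (j : ℕ) :
    ∑ l ∈ Finset.range n, x ((j + l : ℕ) : Fin n) = ∑ a : Fin n, x a := by
  have h1 : ∀ l : ℕ, ((j + l : ℕ) : Fin n) = (j : Fin n) + (l : Fin n) := by
    intro l; push_cast; ring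
  calc ∑ l ∈ Finset.range n, x ((j + l : ℕ) : Fin n)
      = ∑ l ∈ Finset.range n, x ((j : Fin n) + (l : Fin n)) := by
        exact Finset.sum_congr rfl fun l _ => by rw [h1]
    _ = ∑ a : Fin n, x ((j : Fin n) + a) := by
        rw [← Fin.sum_univ_eq_sum_range (fun l => x ((j : Fin n) + (l : Fin n)))]
        exact Finset.sum_congr rfl fun a _ => by rw [Fin.cast_val_eq_self]
    _ = ∑ a : Fin n, x a := Equiv.sum_comp (Equiv.addLeft (j : Fin n)) x

lemma cycle_count (n : ℕ) [NeZero n] (x : Fin n → ℤ) :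
    ((Finset.univ.filter (fun i : Fin n => goodShift n x i)).card : ℤ) ≤
      if 0 < ∑ j, x j then min (∑ j, x j) (n : ℤ) else 0 := by
  have hn : 1 ≤ n := Nat.one_le_iff_ne_zero.mpr (NeZero.ne n)
  set s : ℤ := ∑ j, x j with hs
  set T : ℕ → ℤ := fun j => ∑ l ∈ Finset.range j, x (l : Fin n) with hT
  set Gd := Finset.univ.filter (fun i : Fin n => goodShift n x i) with hGd
  -- reformulation of goodness
  have hgood : ∀ i ∈ Gd, ∀ k ∈ Finset.Icc 1 n, T (i : ℕ) < T ((i : ℕ) + k) := by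
    intro i hi k hk
    have h := (Finset.mem_filter.mp hi).2 k hk
    have h2 := partial_shift n x (i : ℕ) k
    rw [Fin.cast_val_eq_self] at h2
    rw [h2] at h
    simp only [hT]
    omega
  have hTn : ∀ j : ℕ, T (j + n) = T j + s := by
    intro j
    have h2 := partial_shift n x j n
    have hb : ∑ l ∈ Finset.range n, x ((l : Fin n) + (j : Fin n)) = s := by
      rw [hs, ← block_sum n x j]
      exact Finset.sum_congr rfl fun l _ => by push_cast; rw [add_comm]
    rw [hb] at h2
    simp only [hT]
    omega
  rcases Finset.eq_empty_or_nonempty Gd with hGde | ⟨i₁, hi₁⟩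
  · rw [hGde]
    simp only [Finset.card_empty, Nat.cast_zero]
    split
    · exact le_min (by omega) (by positivity)
    · exact le_refl 0
  · -- s > 0
    have hspos : 0 < s := by
      have := hgood i₁ hi₁ n (Finset.mem_Icc.mpr ⟨hn, le_refl n⟩)
      have h2 := hTn (i₁ : ℕ)
      omega
    rw [if_pos hspos]
    -- monotonicity of T on good indices
    have hmono : ∀ i ∈ Gd, ∀ i' ∈ Gd, (i : ℕ) < (i' : ℕ) → T (i : ℕ) < T (i' : ℕ) := by
      intro i hi i' hi' hlt
      have hk : (i' : ℕ) - (i : ℕ) ∈ Finset.Icc 1 n := by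
        have := i'.isLt; rw [Finset.mem_Icc]; omega
      have := hgood i hi _ hk
      have heq : (i : ℕ) + ((i' : ℕ) - (i : ℕ)) = (i' : ℕ) := by omega
      rwa [heq] at this
    -- minimal good index
    obtain ⟨i₀, hi₀, hmin⟩ := Gd.exists_min_image (fun i : Fin n => (i : ℕ)) ⟨i₁, hi₁⟩
    -- upper bound for T on good indices
    have hupper : ∀ i ∈ Gd, T (i : ℕ) < T (i₀ : ℕ) + s := by
      intro i hi
      rw [← hTn]
      rcases eq_or_lt_of_le (hmin i hi) with heq | hlt
      · rw [← heq]
        exact hgood i₀ hi₀ n (Finset.mem_Icc.mpr ⟨hn, le_refl n⟩)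
      · have hk : (i₀ : ℕ) + n - (i : ℕ) ∈ Finset.Icc 1 n := by
          have := i.isLt; rw [Finset.mem_Icc]; omega
        have := hgood i hi _ hk
        have heq : (i : ℕ) + ((i₀ : ℕ) + n - (i : ℕ)) = (i₀ : ℕ) + n := by
          have := i.isLt; omega
        rwa [heq] at this
    -- lower bound
    have hlower : ∀ i ∈ Gd, T (i₀ : ℕ) ≤ T (i : ℕ) := by
      intro i hi
      rcases eq_or_lt_of_le (hmin i hi) with heq | hlt
      · rw [heq]
      · exact le_of_lt (hmono i₀ hi₀ i hi hlt)
    -- injection into Ico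
    have hcard : Gd.card ≤ (Finset.Ico (T (i₀ : ℕ)) (T (i₀ : ℕ) + s)).card := by
      refine Finset.card_le_card_of_injOn (fun i => T (i : ℕ)) ?_ ?_
      · intro i hi
        rw [Finset.mem_coe, Finset.mem_Ico]
        exact ⟨hlower i hi, hupper i hi⟩
      · intro i hi i' hi' hTe
        by_contra hne
        rcases lt_trichotomy (i : ℕ) (i' : ℕ) with h | h | h
        · exact absurd hTe (ne_of_lt (hmono i hi i' hi' h))
        · exact hne (Fin.ext h)
        · exact absurd hTe.symm (ne_of_lt (hmono i' hi' i hi h))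
    have hIco : (Finset.Ico (T (i₀ : ℕ)) (T (i₀ : ℕ) + s)).card = s.toNat := by
      rw [Int.card_Ico]; omega
    have hcardn : Gd.card ≤ n := by
      calc Gd.card ≤ Finset.univ.card := Finset.card_filter_le _ _
        _ = n := by simp
    have h1 : (Gd.card : ℤ) ≤ s := by
      rw [hIco] at hcard
      omega
    exact le_min h1 (by exact_mod_cast hcardn)


lemma map_eq_pi (n : ℕ) {Ω : Type*} [MeasurableSpace Ω] (μ : Measure Ω)
    [IsProbabilityMeasure μ]
    (ξ : ℕ → Ω → ℤ) (hmeas : ∀ i, Measurable (ξ i))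
    (hindep : iIndepFun ξ μ)
    (hident : ∀ i j, IdentDistrib (ξ i) (ξ j) μ μ)
    (g : Fin n → ℕ) (hg : Function.Injective g) :
    Measure.pi (fun _ : Fin n => μ.map (ξ 0)) = μ.map (fun ω j => ξ (g j) ω) := by
  haveI : IsProbabilityMeasure (μ.map (ξ 0)) :=
    Measure.isProbabilityMeasure_map (hmeas 0).aemeasurable
  have hX : Measurable (fun ω (j : Fin n) => ξ (g j) ω) :=
    measurable_pi_lambda _ (fun j => hmeas _)
  refine Measure.pi_eq fun s hs => ?_
  rw [Measure.map_apply hX (MeasurableSet.univ_pi hs)]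
  classical
  -- auxiliary indexed sets on ℕ
  set s' : ℕ → Set ℤ := fun m => if h : ∃ j, g j = m then s h.choose else Set.univ with hs'
  have hs'g : ∀ j : Fin n, s' (g j) = s j := by
    intro j
    have h : ∃ j', g j' = g j := ⟨j, rfl⟩
    rw [hs']
    simp only [dif_pos h]
    have : h.choose = j := hg h.choose_spec
    rw [this]
  have hs'meas : ∀ m, MeasurableSet (s' m) := by
    intro m
    rw [hs']
    dsimp only
    split
    · exact hs _
    · exact MeasurableSet.univ
  have hpre : (fun ω (j : Fin n) => ξ (g j) ω) ⁻¹' (Set.pi Set.univ s)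
      = ⋂ m ∈ Finset.univ.image g, ξ m ⁻¹' (s' m) := by
    ext ω
    simp only [Set.mem_preimage, Set.mem_pi, Set.mem_univ, forall_true_left, Set.mem_iInter,
      Finset.mem_image, Finset.mem_univ, true_and]
    constructor
    · rintro h m ⟨j, rfl⟩
      rw [hs'g j]; exact h j
    · intro h j
      have := h (g j) ⟨j, rfl⟩
      rwa [hs'g j] at this
  rw [hpre]
  rw [hindep.meas_biInter (fun m _ => ⟨s' m, hs'meas m, rfl⟩)]
  rw [Finset.prod_image (fun a _ b _ h => hg h)]
  refine Finset.prod_congr rfl fun j _ => ?_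
  rw [hs'g j, ← Measure.map_apply (hmeas (g j)) (hs j), (hident (g j) 0).map_eq]


/-- Cyclic-shift lemma for expectations: if `ξ 1, …, ξ n` are i.i.d. with values in
`ℕ ∪ {−1}`, `S j` are the partial sums, and `F` is nonnegative, measurable and invariant
under cyclic shifts, then
`E[F(ξ) 1_{S_1>0,…,S_n>0}] ≤ (1/n) E[F(ξ) (S_n ⊓ n) 1_{S_n>0}]`. -/
theorem cyclic_shift_expectation_le (n : ℕ) (hn : 1 ≤ n)
    {Ω : Type*} [MeasurableSpace Ω] (μ : Measure Ω) [IsProbabilityMeasure μ]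
    (ξ : ℕ → Ω → ℤ) (hmeas : ∀ i, Measurable (ξ i))
    (hval : ∀ i ω, -1 ≤ ξ i ω)
    (hindep : iIndepFun ξ μ)
    (hident : ∀ i j, IdentDistrib (ξ i) (ξ j) μ μ)
    (F : (Fin n → ℤ) → ℝ) (hF : Measurable F) (hFpos : ∀ x, 0 ≤ F x)
    (hcyc : ∀ (x : Fin n → ℤ) (i : Fin n), F (fun j => x (j + i)) = F x)
    (S : ℕ → Ω → ℤ) (hS : ∀ k ω, S k ω = ∑ l ∈ Finset.range k, ξ l ω)
    (hInt : Integrable (fun ω => F fun i => ξ (i : ℕ) ω) μ) :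
    ∫ ω in {ω | ∀ k ∈ Finset.Icc 1 n, 0 < S k ω}, F (fun i => ξ (i : ℕ) ω) ∂μ ≤
      (1 / n : ℝ) *
        ∫ ω in {ω | 0 < S n ω}, F (fun i => ξ (i : ℕ) ω) * ((min (S n ω) n : ℤ) : ℝ) ∂μ := by
  haveI : NeZero n := ⟨by omega⟩
  set X : Ω → (Fin n → ℤ) := fun ω i => ξ (i : ℕ) ω with hXdef
  have hXm : Measurable X := measurable_pi_lambda _ fun i => hmeas _
  set ρ : Measure (Fin n → ℤ) := μ.map X with hρdef
  set A : Fin n → Set (Fin n → ℤ) := fun i => {x | goodShift n x i} with hAdef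
  set B : Set (Fin n → ℤ) := {x | 0 < ∑ j, x j} with hBdef
  set ψ : (Fin n → ℤ) → ℝ := fun x => F x * ((min (∑ j, x j) (n : ℤ) : ℤ) : ℝ) with hψdef
  set φ : (Fin n → ℤ) → ℝ := fun x => B.indicator ψ x with hφdef
  -- measurability facts
  have hsm : Measurable (fun x : Fin n → ℤ => ∑ j, x j) :=
    Finset.measurable_sum _ fun j _ => measurable_pi_apply j
  have hA : ∀ i, MeasurableSet (A i) := by
    intro i
    have : A i = ⋂ k ∈ Finset.Icc 1 n,
        {x : Fin n → ℤ | 0 < ∑ l ∈ Finset.range k, x ((l : Fin n) + i)} := by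
      ext x; simp [hAdef, goodShift]
    rw [this]
    refine MeasurableSet.biInter (Finset.Icc 1 n).countable_toSet fun k _ => ?_
    exact measurableSet_lt measurable_const
      (Finset.measurable_sum _ fun l _ => measurable_pi_apply ((l : Fin n) + i))
  have hB : MeasurableSet B := measurableSet_lt measurable_const hsm
  have hψm : Measurable ψ := by
    apply hF.mul
    exact measurable_from_top.comp (hsm.min measurable_const)
  have hφm : Measurable φ := hψm.indicator hB
  -- integrability facts
  have hFint : Integrable F ρ :=
    (integrable_map_measure hF.aestronglyMeasurable hXm.aemeasurable).mpr hInt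
  have hφint : Integrable φ ρ := by
    refine Integrable.mono' (hFint.const_mul (n : ℝ)) hφm.aestronglyMeasurable
      (Filter.Eventually.of_forall fun x => ?_)
    by_cases hx : x ∈ B
    · have h1 : (0 : ℤ) < ∑ j, x j := hx
      have hmin0 : (0:ℝ) ≤ ((min (∑ j, x j) (n : ℤ) : ℤ) : ℝ) := by
        have h2 : (0 : ℤ) ≤ min (∑ j, x j) (n : ℤ) := le_min (by omega) (Int.natCast_nonneg n)
        exact_mod_cast h2
      have hminn : ((min (∑ j, x j) (n : ℤ) : ℤ) : ℝ) ≤ (n : ℝ) := by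
        exact_mod_cast min_le_right (∑ j, x j) (n : ℤ)
      have hφx : φ x = F x * ((min (∑ j, x j) (n : ℤ) : ℤ) : ℝ) := Set.indicator_of_mem hx ψ
      rw [hφx, Real.norm_eq_abs, abs_mul, abs_of_nonneg (hFpos x), abs_of_nonneg hmin0,
        mul_comm]
      exact mul_le_mul_of_nonneg_right hminn (hFpos x)
    · have hφx : φ x = 0 := Set.indicator_of_notMem hx ψ
      rw [hφx, norm_zero]
      exact mul_nonneg (Nat.cast_nonneg n) (hFpos x)
  have hAind : ∀ i, Integrable ((A i).indicator F) ρ := fun i => hFint.indicator (hA i)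
  -- transfer lemma across cyclic shifts
  have htrans : ∀ i : Fin n,
      ∫ x, (A i).indicator F x ∂ρ = ∫ x, (A 0).indicator F x ∂ρ := by
    intro i
    have hg : Function.Injective (fun j : Fin n => ((j + i : Fin n) : ℕ)) := by
      intro a b h
      have h2 : a + i = b + i := Fin.val_injective h
      exact add_right_cancel h2
    have hXim : Measurable (fun ω (j : Fin n) => ξ ((j + i : Fin n) : ℕ) ω) :=
      measurable_pi_lambda _ fun j => hmeas _
    have hmap : μ.map (fun ω (j : Fin n) => ξ ((j + i : Fin n) : ℕ) ω) = ρ := by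
      rw [← map_eq_pi n μ ξ hmeas hindep hident _ hg,
        map_eq_pi n μ ξ hmeas hindep hident (fun j : Fin n => (j : ℕ)) Fin.val_injective]
    have hAi : ∀ x : Fin n → ℤ,
        (A i).indicator F x = (A 0).indicator F (fun j => x (j + i)) := by
      intro x
      have hmem : x ∈ A i ↔ (fun j => x (j + i)) ∈ A 0 := by
        simp only [hAdef, Set.mem_setOf_eq, goodShift, add_zero]
      rw [Set.indicator_apply, Set.indicator_apply, hcyc x i]
      by_cases h : x ∈ A i
      · rw [if_pos h, if_pos (hmem.mp h)]
      · rw [if_neg h, if_neg fun hh => h (hmem.mpr hh)]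
    calc ∫ x, (A i).indicator F x ∂ρ
        = ∫ ω, (A i).indicator F (X ω) ∂μ :=
          integral_map hXm.aemeasurable ((hF.indicator (hA i)).aestronglyMeasurable)
      _ = ∫ ω, (A 0).indicator F (fun j => ξ ((j + i : Fin n) : ℕ) ω) ∂μ := by
          refine integral_congr_ae (Filter.Eventually.of_forall fun ω => ?_)
          exact hAi (X ω)
      _ = ∫ x, (A 0).indicator F x ∂(μ.map (fun ω (j : Fin n) => ξ ((j + i : Fin n) : ℕ) ω)) :=
          (integral_map hXim.aemeasurable ((hF.indicator (hA 0)).aestronglyMeasurable)).symm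
      _ = ∫ x, (A 0).indicator F x ∂ρ := by rw [hmap]
  -- partial sums vs coordinates
  have hSsum : ∀ k, k ≤ n → ∀ ω, S k ω = ∑ l ∈ Finset.range k, X ω (l : Fin n) := by
    intro k hk ω
    rw [hS]
    refine Finset.sum_congr rfl fun l hl => ?_
    have hl' : l < n := lt_of_lt_of_le (Finset.mem_range.mp hl) hk
    have : ((l : Fin n) : ℕ) = l := by
      rw [Fin.val_natCast]; exact Nat.mod_eq_of_lt hl'
    rw [hXdef]
    simp only
    rw [this]
  have hSn : ∀ ω, S n ω = ∑ j, X ω j := by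
    intro ω
    calc S n ω = ∑ l ∈ Finset.range n, X ω (l : Fin n) := hSsum n le_rfl ω
      _ = ∑ j : Fin n, X ω (((j : ℕ)) : Fin n) :=
          (Fin.sum_univ_eq_sum_range (fun l => X ω (l : Fin n)) n).symm
      _ = ∑ j, X ω j := Finset.sum_congr rfl fun j _ => by rw [Fin.cast_val_eq_self]
  -- set identities
  have hE1 : {ω | ∀ k ∈ Finset.Icc 1 n, 0 < S k ω} = X ⁻¹' (A 0) := by
    ext ω
    simp only [Set.mem_setOf_eq, Set.mem_preimage, hAdef, goodShift]
    refine forall₂_congr fun k hk => ?_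
    rw [hSsum k (Finset.mem_Icc.mp hk).2 ω]
    have : ∑ l ∈ Finset.range k, X ω ((l : Fin n) + 0)
        = ∑ l ∈ Finset.range k, X ω (l : Fin n) := by simp
    rw [this]
  have hE2 : {ω | 0 < S n ω} = X ⁻¹' B := by
    ext ω
    simp only [Set.mem_setOf_eq, Set.mem_preimage, hBdef, hSn ω]
  -- indicator composition
  have hcomp : ∀ (s : Set (Fin n → ℤ)) (f : (Fin n → ℤ) → ℝ) (ω : Ω),
      (X ⁻¹' s).indicator (fun ω => f (X ω)) ω = s.indicator f (X ω) := by
    intro s f ω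
    by_cases h : X ω ∈ s
    · rw [Set.indicator_of_mem (show ω ∈ X ⁻¹' s from h), Set.indicator_of_mem h]
    · rw [Set.indicator_of_notMem (show ω ∉ X ⁻¹' s from h), Set.indicator_of_notMem h]
  -- rewrite LHS
  have hL : ∫ ω in {ω | ∀ k ∈ Finset.Icc 1 n, 0 < S k ω}, F (fun i => ξ (i : ℕ) ω) ∂μ
      = ∫ x, (A 0).indicator F x ∂ρ := by
    rw [hE1, ← integral_indicator (hXm (hA 0))]
    rw [show ((X ⁻¹' (A 0)).indicator fun ω => F (fun i => ξ (i : ℕ) ω))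
        = fun ω => (A 0).indicator F (X ω) from funext fun ω => hcomp (A 0) F ω]
    exact (integral_map hXm.aemeasurable ((hF.indicator (hA 0)).aestronglyMeasurable)).symm
  -- rewrite RHS
  have hR : ∫ ω in {ω | 0 < S n ω}, F (fun i => ξ (i : ℕ) ω) * ((min (S n ω) n : ℤ) : ℝ) ∂μ
      = ∫ x, φ x ∂ρ := by
    rw [hE2, ← integral_indicator (hXm hB)]
    have hfun : (fun ω => F (fun i => ξ (i : ℕ) ω) * ((min (S n ω) n : ℤ) : ℝ))
        = fun ω => ψ (X ω) := by
      funext ω'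
      simp only [hψdef]
      rw [hSn ω']
    have heq : ((X ⁻¹' B).indicator fun ω => F (fun i => ξ (i : ℕ) ω) * ((min (S n ω) n : ℤ) : ℝ))
        = fun ω => B.indicator ψ (X ω) := by
      funext ω
      rw [hfun, ← hcomp B ψ ω]
    rw [heq]
    exact (integral_map hXm.aemeasurable (hψm.indicator hB).aestronglyMeasurable).symm
  -- pointwise inequality
  have hpt : ∀ x, ∑ i : Fin n, (A i).indicator F x ≤ φ x := by
    intro x
    have hsum : ∑ i : Fin n, (A i).indicator F x
        = (((Finset.univ.filter fun i => goodShift n x i)).card : ℝ) * F x := by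
      calc ∑ i : Fin n, (A i).indicator F x
          = ∑ i : Fin n, if goodShift n x i then F x else 0 :=
            Finset.sum_congr rfl fun i _ => by
              rw [hAdef]; simp [Set.indicator_apply, Set.mem_setOf_eq]
        _ = ∑ _i ∈ Finset.univ.filter fun i => goodShift n x i, F x :=
            (Finset.sum_filter _ _).symm
        _ = ((Finset.univ.filter fun i => goodShift n x i)).card • F x := Finset.sum_const _
        _ = _ := nsmul_eq_mul _ _
    rw [hsum]
    have hcc := cycle_count n x
    by_cases hx : x ∈ B
    · have hx' : (0 : ℤ) < ∑ j, x j := hx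
      rw [if_pos hx'] at hcc
      have hφx : φ x = F x * ((min (∑ j, x j) (n : ℤ) : ℤ) : ℝ) := Set.indicator_of_mem hx ψ
      rw [hφx, mul_comm]
      exact mul_le_mul_of_nonneg_left (by exact_mod_cast hcc) (hFpos x)
    · have hx' : ¬ (0 : ℤ) < ∑ j, x j := hx
      rw [if_neg hx'] at hcc
      have hc0 : ((Finset.univ.filter fun i => goodShift n x i)).card = 0 := by omega
      have hφx : φ x = 0 := Set.indicator_of_notMem hx ψ
      rw [hc0, hφx]
      simp
  -- main estimate
  have key : (n : ℝ) * ∫ x, (A 0).indicator F x ∂ρ ≤ ∫ x, φ x ∂ρ := by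
    calc (n : ℝ) * ∫ x, (A 0).indicator F x ∂ρ
        = ∑ _i : Fin n, ∫ x, (A 0).indicator F x ∂ρ := by
          rw [Finset.sum_const, Finset.card_univ, Fintype.card_fin, nsmul_eq_mul]
      _ = ∑ i : Fin n, ∫ x, (A i).indicator F x ∂ρ :=
          Finset.sum_congr rfl fun i _ => (htrans i).symm
      _ = ∫ x, ∑ i : Fin n, (A i).indicator F x ∂ρ :=
          (integral_finset_sum _ fun i _ => hAind i).symm
      _ ≤ ∫ x, φ x ∂ρ :=
          integral_mono (integrable_finset_sum _ fun i _ => hAind i) hφint hpt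
  rw [hL, hR]
  have hn0 : (0 : ℝ) < n := by exact_mod_cast hn
  calc ∫ x, (A 0).indicator F x ∂ρ
      = (1 / n : ℝ) * ((n : ℝ) * ∫ x, (A 0).indicator F x ∂ρ) := by
        field_simp
    _ ≤ (1 / n : ℝ) * ∫ x, φ x ∂ρ :=
        mul_le_mul_of_nonneg_left key (by positivity)
end

section
/- Let x_1,...,x_n ∈ ℕ ∪ {−1} with partial sums s_j = x_1 + ... + x_j. The number of cyclic shifts i ∈ {0,...,n−1} of (x_1,...,x_n) for which all partial sums of the shifted sequence are strictly positive is at most min(s_n, n) when s_n > 0, and equals 0 when s_n ≤ 0. -/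
open Finset
open Fin.NatCast Fin.CommRing

/-- Deterministic cyclic-shift counting: for `x : Fin n → ℤ` with values in `ℕ ∪ {−1}`,
the number of cyclic shifts `i` such that all partial sums of the shifted sequence
`j ↦ x (j + i)` are strictly positive is `0` if the total sum is `≤ 0`, and is at most
`min (total sum) n` otherwise. -/
theorem cyclic_shift_count (n : ℕ) (x : Fin n → ℤ) (hval : ∀ i, -1 ≤ x i) :
    letI good : Finset (Fin n) :=
      Finset.univ.filter fun i =>
        ∀ k : Fin n, 0 < ∑ j ∈ Finset.univ.filter (fun j : Fin n => j ≤ k), x (j + i)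
    ((∑ j, x j ≤ 0) → good.card = 0) ∧
      (0 < ∑ j, x j → (good.card : ℤ) ≤ min (∑ j, x j) (n : ℤ)) := by
  rcases Nat.eq_zero_or_pos n with hn | hn
  · subst hn
    constructor
    · intro _
      simp [Finset.filter_true_of_mem]
    · intro h
      simp at h
  haveI : NeZero n := ⟨hn.ne'⟩
  set K := ∑ j, x j with hK
  set G : Finset (Fin n) :=
      Finset.univ.filter fun i =>
        ∀ k : Fin n, 0 < ∑ j ∈ Finset.univ.filter (fun j : Fin n => j ≤ k), x (j + i)
    with hG
  show (K ≤ 0 → G.card = 0) ∧ (0 < K → (G.card : ℤ) ≤ min K (n : ℤ))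
  -- the partial sums of the periodic extension
  set S : ℕ → ℤ := fun m => ∑ t ∈ Finset.range m, x (t : Fin n) with hS
  -- periodicity
  have hper : ∀ m, S (m + n) = S m + K := by
    intro m
    have h0 : S (m + n) = S m + ∑ t ∈ Finset.range n, x ((m + t : ℕ) : Fin n) :=
      Finset.sum_range_add (fun t : ℕ => x (t : Fin n)) m n
    rw [h0]
    congr 1
    have h1 : ∀ t ∈ Finset.range n, x ((m + t : ℕ) : Fin n) = x ((m : Fin n) + (t : Fin n)) := by
      intro t _; push_cast; ring_nf
    rw [Finset.sum_congr rfl h1,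
      ← Fin.sum_univ_eq_sum_range (fun t : ℕ => x ((m : Fin n) + (t : Fin n))) n]
    simp only [Fin.cast_val_eq_self]
    exact Equiv.sum_comp (Equiv.addLeft (m : Fin n)) x
  -- the filtered sum equals a difference of partial sums
  have hsum : ∀ i k : Fin n,
      ∑ j ∈ Finset.univ.filter (fun j : Fin n => j ≤ k), x (j + i)
        = S (i.val + (k.val + 1)) - S i.val := by
    intro i k
    have hL : ∑ j ∈ Finset.univ.filter (fun j : Fin n => j ≤ k), x (j + i)
        = ∑ t ∈ Finset.range (k.val + 1), x ((t : Fin n) + i) := by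
      rw [Finset.sum_filter]
      have h1 : ∑ j : Fin n, (if j ≤ k then x (j + i) else 0)
          = ∑ j : Fin n, (fun t : ℕ => if t ≤ k.val then x ((t : Fin n) + i) else 0) j.val := by
        refine Finset.sum_congr rfl fun j _ => ?_
        simp only [Fin.cast_val_eq_self, Fin.le_def]
      rw [h1, Fin.sum_univ_eq_sum_range (fun t : ℕ => if t ≤ k.val then x ((t : Fin n) + i) else 0) n]
      rw [← Finset.sum_subset (Finset.range_subset_range.mpr k.isLt)]
      · exact Finset.sum_congr rfl fun t ht =>
          if_pos (by simpa [Nat.lt_succ_iff] using Finset.mem_range.mp ht)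
      · intro t _ ht
        exact if_neg (by simpa [Nat.lt_succ_iff] using ht)
    have hR : S (i.val + (k.val + 1))
        = S i.val + ∑ t ∈ Finset.range (k.val + 1), x ((i.val + t : ℕ) : Fin n) :=
      Finset.sum_range_add (fun t : ℕ => x (t : Fin n)) i.val (k.val + 1)
    have h2 : ∀ t ∈ Finset.range (k.val + 1),
        x ((i.val + t : ℕ) : Fin n) = x ((t : Fin n) + i) := by
      intro t _
      congr 1
      push_cast
      ring
    rw [hL, hR, Finset.sum_congr rfl h2]
    ring
  -- key consequence of goodness
  have hkey : ∀ i ∈ G, ∀ m : ℕ, 0 < m → m ≤ n → S i.val < S (i.val + m) := by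
    intro i hi m hm hmn
    have hgood := (Finset.mem_filter.mp hi).2
    have hk : m - 1 < n := by omega
    have := hgood ⟨m - 1, hk⟩
    rw [hsum] at this
    have hm1 : (m - 1) + 1 = m := by omega
    simp only [hm1] at this
    linarith
  constructor
  · -- total sum ≤ 0 : no good shifts
    intro hK0
    rw [Finset.card_eq_zero, Finset.eq_empty_iff_forall_notMem]
    intro i hi
    have h1 := hkey i hi n hn le_rfl
    rw [hper i.val] at h1
    linarith
  · -- total sum positive
    intro hKpos
    rcases G.eq_empty_or_nonempty with hGe | hGne
    · rw [hGe]
      simp only [Finset.card_empty, Nat.cast_zero]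
      exact le_min hKpos.le (by exact_mod_cast Nat.zero_le n)
    have hcard_n : (G.card : ℤ) ≤ (n : ℤ) := by
      have := Finset.card_filter_le (Finset.univ : Finset (Fin n))
        (fun i => ∀ k : Fin n, 0 < ∑ j ∈ Finset.univ.filter (fun j : Fin n => j ≤ k), x (j + i))
      have h2 : G.card ≤ n := by simpa [hG] using this
      exact_mod_cast h2
    -- strict monotonicity of S on good indices
    have hmono : ∀ i ∈ G, ∀ i' ∈ G, i < i' → S i.val < S i'.val := by
      intro i hi i' _ hlt
      have hlt' : i.val < i'.val := hlt
      have := hkey i hi (i'.val - i.val) (by omega) (by omega)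
      have he : i.val + (i'.val - i.val) = i'.val := by omega
      rwa [he] at this
    set i0 := G.min' hGne with hi0
    have hi0m : i0 ∈ G := G.min'_mem hGne
    have hlow : ∀ i ∈ G, S i0.val ≤ S i.val := by
      intro i hi
      rcases eq_or_lt_of_le (G.min'_le i hi) with h | h
      · exact le_of_eq (congrArg (fun j : Fin n => S j.val) h)
      · exact (hmono i0 hi0m i hi h).le
    have hup : ∀ i ∈ G, S i.val < S i0.val + K := by
      intro i hi
      have h0 : i0.val ≤ i.val := G.min'_le i hi
      have := hkey i hi (i0.val + n - i.val) (by omega) (by omega)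
      have he : i.val + (i0.val + n - i.val) = i0.val + n := by omega
      rw [he, hper] at this
      exact this
    have hmaps : ∀ i ∈ G, S i.val ∈ Finset.Ico (S i0.val) (S i0.val + K) := fun i hi =>
      Finset.mem_Ico.mpr ⟨hlow i hi, hup i hi⟩
    have hinj : Set.InjOn (fun i : Fin n => S i.val) G := by
      intro a ha b hb hab
      by_contra hne
      rcases lt_or_gt_of_ne hne with h | h
      · exact absurd hab (ne_of_lt (hmono a ha b hb h))
      · exact absurd hab.symm (ne_of_lt (hmono b hb a ha h))
    have hcard := Finset.card_le_card_of_injOn _ hmaps hinj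
    rw [Int.card_Ico] at hcard
    have h3 : (S i0.val + K - S i0.val).toNat = K.toNat := by congr 1; ring
    rw [h3] at hcard
    have h4 : (G.card : ℤ) ≤ K := by
      calc (G.card : ℤ) ≤ (K.toNat : ℤ) := by exact_mod_cast hcard
        _ = K := Int.toNat_of_nonneg hKpos.le
    exact le_min h4 hcard_n
end

section
/- Let S be a random walk with i.i.d. steps X_i − 1 where X_i are Poisson(1), conditioned on τ_{−1} = n+1 (first hitting time of −1 equals n+1). For pairwise distinct indices i_1,...,i_k ∈ {1,...,n}, one has i_1⋯i_k · E_n[X_{i_1}⋯X_{i_k}] ≤ E_n[(S_{i_1}+i_1)⋯(S_{i_k}+i_k)]. -/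
open MeasureTheory ProbabilityTheory Finset

lemma pairing_tsum {α : Type*} (f g : α → ENNReal) (e : α → α)
    (he : Function.Involutive e) (C : α → Prop)
    (h1 : ∀ x, ¬ C x → g x ≤ f x)
    (h2 : ∀ x, C x → ¬ C (e x))
    (h3 : ∀ x, C x → g x + g (e x) ≤ f x + f (e x)) :
    ∑' x, g x ≤ ∑' x, f x := by
  classical
  set s : Set α := {x | C x} with hs
  set t : Set α := e '' s with ht
  have hts : ∀ x ∈ t, ¬ C x := by rintro _ ⟨x, hx, rfl⟩; exact h2 x hx
  have hst : ∀ x ∈ s, x ∉ t := fun x hx hxt => hts x hxt hx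
  have hpart : ∀ F : α → ENNReal,
      ∑' x, F x = (∑' x : s, F x) + ((∑' x : t, F x) + ∑' x : ((s ∪ t)ᶜ : Set α), F x) := by
    intro F
    have h1' : ∀ x, F x = s.indicator F x + (t.indicator F x + ((s ∪ t)ᶜ).indicator F x) := by
      intro x
      by_cases hxs : x ∈ s
      · rw [Set.indicator_of_mem hxs, Set.indicator_of_notMem (hst x hxs),
          Set.indicator_of_notMem (show x ∉ (s ∪ t)ᶜ from fun h => h (Or.inl hxs))]
        simp
      · by_cases hxt : x ∈ t
        · rw [Set.indicator_of_notMem hxs, Set.indicator_of_mem hxt,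
            Set.indicator_of_notMem (show x ∉ (s ∪ t)ᶜ from fun h => h (Or.inr hxt))]
          simp
        · rw [Set.indicator_of_notMem hxs, Set.indicator_of_notMem hxt,
            Set.indicator_of_mem (show x ∈ (s ∪ t)ᶜ from fun h => h.elim hxs hxt)]
          simp
    calc ∑' x, F x
        = ∑' x, (s.indicator F x + (t.indicator F x + ((s ∪ t)ᶜ).indicator F x)) :=
          tsum_congr h1'
      _ = _ := by
          rw [ENNReal.tsum_add, ENNReal.tsum_add, _root_.tsum_subtype s F,
            _root_.tsum_subtype t F, _root_.tsum_subtype ((s ∪ t)ᶜ) F]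
  have hte : ∀ F : α → ENNReal, (∑' x : t, F x) = ∑' x : s, F (e x) :=
    fun F => tsum_image F he.injective.injOn
  rw [hpart f, hpart g, hte f, hte g]
  have key : (∑' x : s, g x) + ∑' x : s, g (e x) ≤ (∑' x : s, f x) + ∑' x : s, f (e x) := by
    rw [← ENNReal.tsum_add, ← ENNReal.tsum_add]
    exact ENNReal.tsum_le_tsum fun x => h3 x x.2
  have hrest : (∑' x : ((s ∪ t)ᶜ : Set α), g x) ≤ ∑' x : ((s ∪ t)ᶜ : Set α), f x :=
    ENNReal.tsum_le_tsum fun x => h1 x (fun hC => (by simpa using x.2 : x.1 ∉ s ∪ t) (Or.inl hC))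
  calc (∑' x : s, g x) + ((∑' x : s, g (e x)) + ∑' x : ((s ∪ t)ᶜ : Set α), g x)
      = ((∑' x : s, g x) + ∑' x : s, g (e x)) + ∑' x : ((s ∪ t)ᶜ : Set α), g x := by ring
    _ ≤ ((∑' x : s, f x) + ∑' x : s, f (e x)) + ∑' x : ((s ∪ t)ᶜ : Set α), f x :=
        add_le_add key hrest
    _ = _ := by ring


/-- prefix sum of the first `m` coordinates -/
def pwPsum (n m : ℕ) (x : Fin (n + 1) → ℕ) : ℕ :=
  ∑ t ∈ Finset.univ.filter (fun t : Fin (n + 1) => (t : ℕ) < m), x t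

/-- the set of "excursion" configurations -/
def pwGood (n : ℕ) : Set (Fin (n + 1) → ℕ) :=
  {x | (∀ m, 1 ≤ m → m ≤ n → m ≤ pwPsum n m x) ∧ pwPsum n (n + 1) x = n}

lemma pwPsum_swap_le (n m : ℕ) (a b : Fin (n + 1)) (x : Fin (n + 1) → ℕ)
    (hx : x b ≤ x a) (hm : m ≤ (a : ℕ)) :
    pwPsum n m x ≤ pwPsum n m (x ∘ Equiv.swap a b) := by
  apply Finset.sum_le_sum
  intro t ht
  simp only [Finset.mem_filter] at ht
  have hta : t ≠ a := by
    intro h; subst h; omega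
  by_cases htb : t = b
  · subst htb
    simp [Equiv.swap_apply_right, hx]
  · simp [Equiv.swap_apply_of_ne_of_ne hta htb]

lemma pwPsum_swap_eq (n m : ℕ) (a b : Fin (n + 1)) (x : Fin (n + 1) → ℕ)
    (ha : (a : ℕ) < m) (hb : (b : ℕ) < m) :
    pwPsum n m (x ∘ Equiv.swap a b) = pwPsum n m x := by
  unfold pwPsum
  apply Finset.sum_nbij' (fun t => Equiv.swap a b t) (fun t => Equiv.swap a b t)
  · intro t ht
    simp only [Finset.mem_filter, Finset.mem_univ, true_and] at ht ⊢
    by_cases h1 : t = a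
    · subst h1; simpa [Equiv.swap_apply_left] using hb
    by_cases h2 : t = b
    · subst h2; simpa [Equiv.swap_apply_right] using ha
    · simpa [Equiv.swap_apply_of_ne_of_ne h1 h2] using ht
  · intro t ht
    simp only [Finset.mem_filter, Finset.mem_univ, true_and] at ht ⊢
    by_cases h1 : t = a
    · subst h1; simpa [Equiv.swap_apply_left] using hb
    by_cases h2 : t = b
    · subst h2; simpa [Equiv.swap_apply_right] using ha
    · simpa [Equiv.swap_apply_of_ne_of_ne h1 h2] using ht
  · intro t _; simp
  · intro t _; simp
  · intro t _; simp

lemma pwGood_swap (n : ℕ) (a b : Fin (n + 1)) (hba : (b : ℕ) < (a : ℕ))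
    (x : Fin (n + 1) → ℕ) (hxg : x ∈ pwGood n) (hx : x b ≤ x a) :
    (x ∘ Equiv.swap a b) ∈ pwGood n := by
  obtain ⟨hg1, hg2⟩ := hxg
  constructor
  · intro m h1m hmn
    by_cases hma : m ≤ (a : ℕ)
    · exact le_trans (hg1 m h1m hmn) (pwPsum_swap_le n m a b x hx hma)
    · rw [pwPsum_swap_eq n m a b x (by omega) (by omega)]
      exact hg1 m h1m hmn
  · rw [pwPsum_swap_eq n (n + 1) a b x (a.isLt) (b.isLt)]
    exact hg2

/-- product weight -/
noncomputable def pwWgt (n : ℕ) (x : Fin (n + 1) → ℕ) : ENNReal :=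
  ∏ t, (poissonMeasure 1) {x t}

lemma pwWgt_comp_equiv (n : ℕ) (σ : Equiv.Perm (Fin (n + 1))) (x : Fin (n + 1) → ℕ) :
    pwWgt n (x ∘ σ) = pwWgt n x :=
  Equiv.prod_comp σ (fun t => (poissonMeasure 1) {x t})

/-- the quantity `E[∏ X_{I s} ; good]` as a tsum (relative to sort-of pwGood) -/
noncomputable def pwQ (n k : ℕ) (I : Fin k → Fin (n + 1)) : ENNReal :=
  ∑' x : Fin (n + 1) → ℕ,
    (pwGood n).indicator (fun x => (↑(∏ s, x (I s)) : ENNReal) * pwWgt n x) x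

lemma pwQ_step (n k : ℕ) (I I' : Fin k → Fin (n + 1)) (r : Fin k)
    (hoff : ∀ s, s ≠ r → I' s = I s) (hlt : ((I' r : ℕ)) < (I r : ℕ))
    (hdis : ∀ s, s ≠ r → I s ≠ I r) :
    pwQ n k I ≤ pwQ n k I' := by
  classical
  set a : Fin (n + 1) := I r with ha
  set b : Fin (n + 1) := I' r with hb
  have hab : b ≠ a := by intro h; rw [h] at hlt; omega
  set e : (Fin (n + 1) → ℕ) → (Fin (n + 1) → ℕ) := fun x => x ∘ Equiv.swap a b with he_def
  have he : Function.Involutive e := by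
    intro x; funext t; simp [he_def, Equiv.swap_apply_self]
  have hea : ∀ x, e x a = x b := by intro x; simp [he_def, Equiv.swap_apply_left]
  have heb : ∀ x, e x b = x a := by intro x; simp [he_def, Equiv.swap_apply_right]
  have heo : ∀ x t, t ≠ a → t ≠ b → e x t = x t := by
    intro x t h1 h2; simp [he_def, Equiv.swap_apply_of_ne_of_ne h1 h2]
  apply pairing_tsum _ _ e he (fun x => x ∈ pwGood n ∧ x b < x a)
  · -- h1
    intro x hC
    by_cases hxg : x ∈ pwGood n
    · have hba : x a ≤ x b := by
        by_contra h; exact hC ⟨hxg, by omega⟩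
      rw [Set.indicator_of_mem hxg, Set.indicator_of_mem hxg]
      apply mul_le_mul_left
      apply Nat.cast_le.mpr
      apply Finset.prod_le_prod'
      intro s _
      by_cases hs : s = r
      · subst hs; simpa [← ha, ← hb] using hba
      · rw [hoff s hs]
    · rw [Set.indicator_of_notMem hxg, Set.indicator_of_notMem hxg]
  · -- h2
    rintro x ⟨hxg, hxlt⟩
    rintro ⟨-, habs⟩
    rw [hea, heb] at habs
    omega
  · -- h3
    rintro x ⟨hxg, hxlt⟩
    have hexg : e x ∈ pwGood n :=
      pwGood_swap n a b hlt x hxg (le_of_lt hxlt)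
    rw [Set.indicator_of_mem hxg, Set.indicator_of_mem hxg,
      Set.indicator_of_mem hexg, Set.indicator_of_mem hexg]
    have hwe : pwWgt n (e x) = pwWgt n x := pwWgt_comp_equiv n (Equiv.swap a b) x
    rw [hwe, ← add_mul, ← add_mul]
    apply mul_le_mul_left
    -- now a ℕ-level inequality
    have hprodx : ∀ (y : Fin (n + 1) → ℕ) (K : Fin k → Fin (n + 1)),
        ∏ s, y (K s) = y (K r) * ∏ s ∈ Finset.univ.erase r, y (K s) :=
      fun y K => (Finset.mul_prod_erase Finset.univ (fun s => y (K s)) (Finset.mem_univ r)).symm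
    have herase : ∀ s ∈ Finset.univ.erase r, I' s = I s := by
      intro s hs; exact hoff s (Finset.ne_of_mem_erase hs)
    have herase2 : ∀ (y : Fin (n+1) → ℕ), ∏ s ∈ Finset.univ.erase r, y (I' s)
        = ∏ s ∈ Finset.univ.erase r, y (I s) :=
      fun y => Finset.prod_congr rfl (fun s hs => by rw [herase s hs])
    set P : ℕ := ∏ s ∈ Finset.univ.erase r, x (I s) with hP
    set P' : ℕ := ∏ s ∈ Finset.univ.erase r, (e x) (I s) with hP'
    have hPP' : P ≤ P' := by
      apply Finset.prod_le_prod'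
      intro s hs
      have hsa : I s ≠ a := hdis s (Finset.ne_of_mem_erase hs)
      by_cases hsb : I s = b
      · rw [hsb, heb]; exact le_of_lt hxlt
      · rw [heo x (I s) hsa hsb]
    have goal_nat : x a * P + x b * P' ≤ x b * P + x a * P' := by
      obtain ⟨c, hc⟩ := Nat.exists_eq_add_of_le (le_of_lt hxlt)
      obtain ⟨d, hd⟩ := Nat.exists_eq_add_of_le hPP'
      rw [hc, hd]; ring_nf; nlinarith
    calc ((∏ s, x (I s) : ℕ) : ENNReal) + ((∏ s, (e x) (I s) : ℕ) : ENNReal)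
        = ((x a * P + x b * P' : ℕ) : ENNReal) := by
          rw [hprodx x I, hprodx (e x) I, ← ha, hea, hP, hP']
          push_cast; ring
      _ ≤ ((x b * P + x a * P' : ℕ) : ENNReal) := by exact_mod_cast goal_nat
      _ = ((∏ s, x (I' s) : ℕ) : ENNReal) + ((∏ s, (e x) (I' s) : ℕ) : ENNReal) := by
          rw [hprodx x I', hprodx (e x) I', ← hb, heb, herase2 x, herase2 (e x), hP, hP']
          push_cast; ring

lemma pwQ_perm (n k : ℕ) (I : Fin k → Fin (n + 1)) (σ : Equiv.Perm (Fin k)) :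
    pwQ n k (I ∘ σ) = pwQ n k I := by
  unfold pwQ
  apply tsum_congr
  intro x
  by_cases hx : x ∈ pwGood n
  · rw [Set.indicator_of_mem hx, Set.indicator_of_mem hx]
    congr 2
    exact Equiv.prod_comp σ (fun s => x (I s))
  · rw [Set.indicator_of_notMem hx, Set.indicator_of_notMem hx]

lemma pwQ_mono_strict (n k : ℕ) (ι J : Fin k → Fin (n + 1))
    (hsm : StrictMono ι) (hJ : ∀ r, (J r : ℕ) ≤ (ι r : ℕ)) :
    pwQ n k ι ≤ pwQ n k J := by
  classical
  set M : ℕ → (Fin k → Fin (n + 1)) := fun d r => if (r : ℕ) < d then J r else ι r with hM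
  have hM0 : M 0 = ι := by funext r; simp [hM]
  have hMk : M k = J := by funext r; simp [hM, r.isLt]
  have hstep : ∀ d, pwQ n k (M d) ≤ pwQ n k (M (d + 1)) := by
    intro d
    by_cases hdk : d < k
    · set r : Fin k := ⟨d, hdk⟩ with hr
      by_cases hJI : J r = ι r
      · have : M d = M (d + 1) := by
          funext s
          simp only [hM]
          by_cases hs : (s : ℕ) < d
          · simp [hs, (by omega : (s:ℕ) < d + 1)]
          · by_cases hs2 : (s : ℕ) < d + 1
            · have hsd : (s : ℕ) = d := by omega
              have hsr : s = r := by apply Fin.ext; simp [hr, hsd]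
              simp [hs, hs2, hsr, hJI]
            · simp [hs, hs2]
        rw [this]
      · apply pwQ_step n k (M d) (M (d + 1)) r
        · intro s hs
          have : (s : ℕ) ≠ d := fun h => hs (Fin.ext (by simp [hr, h]))
          simp only [hM]
          by_cases h1 : (s : ℕ) < d
          · simp [h1, (by omega : (s:ℕ) < d + 1)]
          · have h2 : ¬ ((s:ℕ) < d + 1) := by omega
            simp [h1, h2]
        · have h1 : M (d + 1) r = J r := by simp [hM, hr]
          have h2 : M d r = ι r := by simp [hM, hr]
          rw [h1, h2]
          have h3 := hJ r
          have h4 : (J r : ℕ) ≠ (ι r : ℕ) := fun h => hJI (Fin.ext h)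
          omega
        · intro s hs
          have h2 : M d r = ι r := by simp [hM, hr]
          rw [h2]
          simp only [hM]
          by_cases h1 : (s : ℕ) < d
          · simp only [h1, if_true]
            intro habs
            have hlt2 : (s : ℕ) < (r : ℕ) := by simp [hr]; omega
            have : (ι s : ℕ) > (ι s : ℕ) := by
              calc (ι s : ℕ) ≥ (J s : ℕ) := hJ s
                _ = (ι r : ℕ) := by rw [habs]
                _ > (ι s : ℕ) := by
                    have := hsm (show s < r from hlt2)
                    omega
            omega
          · simp only [h1, if_false]
            intro habs
            exact hs (hsm.injective habs)
    · have : M d = M (d + 1) := by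
        funext s
        have : (s : ℕ) < d := by have := s.isLt; omega
        simp [hM, this, (by omega : (s:ℕ) < d + 1)]
      rw [this]
  have hchain : ∀ d, pwQ n k (M 0) ≤ pwQ n k (M d) := by
    intro d
    induction d with
    | zero => exact le_refl _
    | succ d ih => exact le_trans ih (hstep d)
  calc pwQ n k ι = pwQ n k (M 0) := by rw [hM0]
    _ ≤ pwQ n k (M k) := hchain k
    _ = pwQ n k J := by rw [hMk]

lemma pwQ_mono (n k : ℕ) (ι J : Fin k → Fin (n + 1))
    (hinj : Function.Injective ι) (hJ : ∀ r, (J r : ℕ) ≤ (ι r : ℕ)) :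
    pwQ n k ι ≤ pwQ n k J := by
  classical
  set σ : Equiv.Perm (Fin k) := Tuple.sort ι with hσ
  have hmono : Monotone (ι ∘ σ) := Tuple.monotone_sort ι
  have hinj2 : Function.Injective (ι ∘ σ) := hinj.comp σ.injective
  have hsm : StrictMono (ι ∘ σ) := hmono.strictMono_of_injective hinj2
  calc pwQ n k ι = pwQ n k (ι ∘ σ) := (pwQ_perm n k ι σ).symm
    _ ≤ pwQ n k (J ∘ σ) := pwQ_mono_strict n k (ι ∘ σ) (J ∘ σ) hsm (fun r => hJ (σ r))
    _ = pwQ n k J := pwQ_perm n k J σ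

lemma pw_nu_singleton (n : ℕ) (x : Fin (n + 1) → ℕ) :
    (Measure.pi fun _ : Fin (n + 1) => poissonMeasure 1) {x} = pwWgt n x := by
  rw [← Set.univ_pi_singleton, Measure.pi_pi]
  rfl

lemma pw_setLintegral (n : ℕ) (F : (Fin (n + 1) → ℕ) → ENNReal) :
    ∫⁻ x in pwGood n, F x ∂(Measure.pi fun _ : Fin (n + 1) => poissonMeasure 1)
      = ∑' x : Fin (n + 1) → ℕ, (pwGood n).indicator (fun x => F x * pwWgt n x) x := by
  rw [← lintegral_indicator MeasurableSet.of_discrete F, lintegral_countable']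
  apply tsum_congr
  intro x
  by_cases hx : x ∈ pwGood n
  · rw [Set.indicator_of_mem hx, Set.indicator_of_mem hx, pw_nu_singleton]
  · rw [Set.indicator_of_notMem hx, Set.indicator_of_notMem hx, zero_mul]

lemma pw_sum_reindex (n m : ℕ) (hm : m ≤ n + 1) (f : ℕ → ℕ) :
    ∑ j ∈ Finset.Icc 1 m, f j
      = ∑ t ∈ Finset.univ.filter (fun t : Fin (n + 1) => (t : ℕ) < m), f ((t : ℕ) + 1) := by
  apply Finset.sum_bij' (i := fun (j : ℕ) (hj : j ∈ Finset.Icc 1 m) =>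
      (⟨j - 1, by simp only [Finset.mem_Icc] at hj; omega⟩ : Fin (n + 1)))
    (j := fun (t : Fin (n + 1)) (ht : t ∈ Finset.univ.filter (fun t : Fin (n + 1) => (t : ℕ) < m))
      => (t : ℕ) + 1)
  case hi =>
    intro j hj
    simp only [Finset.mem_Icc] at hj
    simp only [Finset.mem_filter, Finset.mem_univ, true_and]
    omega
  case hj =>
    intro t ht
    simp only [Finset.mem_filter, Finset.mem_univ, true_and] at ht
    simp only [Finset.mem_Icc]
    omega
  case left_neg =>
    intro j hj
    simp only [Finset.mem_Icc] at hj
    simp only [Fin.val_mk]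
    omega
  case right_neg =>
    intro t ht
    apply Fin.ext
    simp
  case h =>
    intro j hj
    simp only [Finset.mem_Icc] at hj
    congr 1
    simp only [Fin.val_mk]
    omega

lemma pw_card_filter (n m : ℕ) (hm : m ≤ n + 1) :
    (Finset.univ.filter (fun t : Fin (n + 1) => (t : ℕ) < m)).card = m := by
  have h : (Finset.univ.filter (fun t : Fin (n + 1) => (t : ℕ) < m)).card
      = (Finset.range m).card := by
    apply Finset.card_bij' (i := fun (t : Fin (n + 1)) _ => (t : ℕ))
      (j := fun (j : ℕ) (hj : j ∈ Finset.range m) =>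
        (⟨j, by simp only [Finset.mem_range] at hj; omega⟩ : Fin (n + 1)))
    case hi =>
      intro t ht
      simp only [Finset.mem_filter, Finset.mem_univ, true_and] at ht
      simpa using ht
    case hj =>
      intro j hj
      simp only [Finset.mem_range] at hj
      simp only [Finset.mem_filter, Finset.mem_univ, true_and]
      simpa using hj
    case left_inv => intro t _; apply Fin.ext; simp
    case right_inv => intro j _; simp
  rw [h, Finset.card_range]

lemma pw_map_eq {Ω : Type*} [MeasurableSpace Ω] (μ : Measure Ω) [IsProbabilityMeasure μ]
    (X : ℕ → Ω → ℕ) (hmeas : ∀ i, Measurable (X i))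
    (hindep : iIndepFun X μ)
    (hdist : ∀ i, Measure.map (X i) μ = poissonMeasure 1) (n : ℕ) :
    Measure.map (fun ω (t : Fin (n + 1)) => X ((t : ℕ) + 1) ω) μ
      = Measure.pi (fun _ : Fin (n + 1) => poissonMeasure 1) := by
  classical
  set Y : Ω → (Fin (n + 1) → ℕ) := fun ω t => X ((t : ℕ) + 1) ω with hY
  have hYm : Measurable Y := measurable_pi_lambda _ (fun t => hmeas _)
  rw [Measure.ext_iff_singleton]
  intro x
  set sets : ℕ → Set ℕ := fun j => if hj : j - 1 < n + 1 then {x ⟨j - 1, hj⟩} else Set.univ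
    with hsets
  have hsets_eq : ∀ j, ∀ hj : j ∈ Finset.Icc 1 (n + 1), sets j = {x ⟨j - 1, by
      simp only [Finset.mem_Icc] at hj; omega⟩} := by
    intro j hj
    simp only [Finset.mem_Icc] at hj
    simp only [hsets]
    rw [dif_pos (by omega : j - 1 < n + 1)]
  have hpre : Y ⁻¹' {x} = ⋂ j ∈ Finset.Icc 1 (n + 1), X j ⁻¹' sets j := by
    ext ω
    simp only [Set.mem_preimage, Set.mem_singleton_iff, Set.mem_iInter, funext_iff, hY]
    constructor
    · intro h j hj
      rw [hsets_eq j hj]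
      simp only [Finset.mem_Icc] at hj
      have := h ⟨j - 1, by omega⟩
      simp only [Set.mem_preimage, Set.mem_singleton_iff]
      convert this using 2
      simp only [Fin.val_mk]
      omega
    · intro h t
      have hj : (t : ℕ) + 1 ∈ Finset.Icc 1 (n + 1) := by
        simp only [Finset.mem_Icc]
        have := t.isLt
        omega
      have := h ((t : ℕ) + 1) hj
      rw [hsets_eq _ hj] at this
      simp only [Set.mem_preimage, Set.mem_singleton_iff] at this
      convert this using 2
      apply Fin.ext; simp
  rw [Measure.map_apply hYm MeasurableSet.of_discrete, hpre,
    hindep.measure_inter_preimage_eq_mul (Finset.Icc 1 (n + 1))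
      (fun j _ => MeasurableSet.of_discrete)]
  have hterm : ∀ j ∈ Finset.Icc 1 (n + 1),
      μ (X j ⁻¹' sets j) = (poissonMeasure 1) (sets j) := by
    intro j _
    rw [← hdist j, Measure.map_apply (hmeas j) MeasurableSet.of_discrete]
  rw [Finset.prod_congr rfl hterm, ← Set.univ_pi_singleton, Measure.pi_pi]
  apply Finset.prod_bij' (i := fun (j : ℕ) (hj : j ∈ Finset.Icc 1 (n + 1)) =>
      (⟨j - 1, by simp only [Finset.mem_Icc] at hj; omega⟩ : Fin (n + 1)))
    (j := fun (t : Fin (n + 1)) _ => (t : ℕ) + 1)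
  case hi => intro j hj; exact Finset.mem_univ _
  case hj =>
    intro t _
    simp only [Finset.mem_Icc]
    have := t.isLt
    omega
  case left_inv =>
    intro j hj
    simp only [Finset.mem_Icc] at hj
    simp only [Fin.val_mk]
    omega
  case right_inv =>
    intro t _
    apply Fin.ext
    simp
  case h => intro j hj; rw [hsets_eq j hj]

lemma pw_setLintegral_pull {Ω : Type*} [MeasurableSpace Ω] (μ : Measure Ω) (n : ℕ)
    (Y : Ω → (Fin (n + 1) → ℕ)) (hYm : Measurable Y)
    (hmap : Measure.map Y μ = Measure.pi fun _ : Fin (n + 1) => poissonMeasure 1)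
    (f : (Fin (n + 1) → ℕ) → ENNReal) :
    ∫⁻ ω in Y ⁻¹' (pwGood n), f (Y ω) ∂μ
      = ∑' x : Fin (n + 1) → ℕ, (pwGood n).indicator (fun x => f x * pwWgt n x) x := by
  rw [← setLIntegral_map MeasurableSet.of_discrete (measurable_of_countable _) hYm, hmap,
    pw_setLintegral]



/-- Monotonicity consequence for the Poisson walk conditioned to be an excursion:
for pairwise distinct indices `i 1, …, i k ∈ {1,…,n}`,
`i_1 ⋯ i_k · E_n[X_{i_1} ⋯ X_{i_k}] ≤ E_n[(S_{i_1}+i_1) ⋯ (S_{i_k}+i_k)]`,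
where `E_n` is the expectation conditioned on `{τ_{−1} = n+1}` (expectations are
written as lower Lebesgue integrals of the nonnegative integrands). -/
theorem conditioned_walk_product_bound
    {Ω : Type*} [MeasurableSpace Ω] (μ : Measure Ω) [IsProbabilityMeasure μ]
    (X : ℕ → Ω → ℕ) (hmeas : ∀ i, Measurable (X i))
    (hindep : iIndepFun X μ)
    (hdist : ∀ i, Measure.map (X i) μ = poissonMeasure 1)
    (S : ℕ → Ω → ℤ) (hS : ∀ m ω, S m ω = ∑ j ∈ Finset.Icc 1 m, ((X j ω : ℤ) - 1))
    (τ : Ω → ℕ) (hτ : ∀ ω, τ ω = sInf {m | 1 ≤ m ∧ S m ω = -1})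
    (n k : ℕ) (hn : 1 ≤ n) (hk : 1 ≤ k)
    (i : Fin k → ℕ) (hinj : Function.Injective i) (hi : ∀ r, i r ∈ Finset.Icc 1 n) :
    (∏ r, (i r : ENNReal)) *
        ∫⁻ ω, ∏ r, (X (i r) ω : ENNReal) ∂(ProbabilityTheory.cond μ {ω | τ ω = n + 1}) ≤
      ∫⁻ ω, ∏ r, ((S (i r) ω + i r).toNat : ENNReal)
        ∂(ProbabilityTheory.cond μ {ω | τ ω = n + 1}) := by
  classical
  set Y : Ω → (Fin (n + 1) → ℕ) := fun ω t => X ((t : ℕ) + 1) ω with hYdef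
  have hYm : Measurable Y := measurable_pi_lambda _ (fun t => hmeas _)
  have hmap : Measure.map Y μ = Measure.pi (fun _ : Fin (n + 1) => poissonMeasure 1) :=
    pw_map_eq μ X hmeas hindep hdist n
  have hival : ∀ r, 1 ≤ i r ∧ i r ≤ n := by
    intro r; have := hi r; simpa [Finset.mem_Icc] using this
  have hSrel : ∀ ω, ∀ m, m ≤ n + 1 → S m ω = (pwPsum n m (Y ω) : ℤ) - m := by
    intro ω m hm
    rw [hS]
    have h1 : ∑ j ∈ Finset.Icc 1 m, ((X j ω : ℤ) - 1)
        = (∑ j ∈ Finset.Icc 1 m, (X j ω : ℤ)) - (∑ j ∈ Finset.Icc 1 m, (1 : ℤ)) :=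
      Finset.sum_sub_distrib _ _
    have h2 : (∑ j ∈ Finset.Icc 1 m, (1 : ℤ)) = m := by
      rw [Finset.sum_const, Nat.card_Icc]
      simp
    have h3 : (∑ j ∈ Finset.Icc 1 m, (X j ω : ℤ)) = (pwPsum n m (Y ω) : ℤ) := by
      have h4 : pwPsum n m (Y ω) = ∑ j ∈ Finset.Icc 1 m, X j ω := by
        unfold pwPsum
        rw [pw_sum_reindex n m hm (fun j => X j ω)]
      rw [h4]
      push_cast
      rfl
    rw [h1, h2, h3]
  have hA0 : ∀ ω, S 0 ω = 0 := by intro ω; rw [hS]; simp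
  have hstep : ∀ ω m, S (m + 1) ω = S m ω + ((X (m + 1) ω : ℤ) - 1) := by
    intro ω m
    rw [hS, hS, Finset.sum_Icc_succ_top (by omega : 1 ≤ m + 1)]
  have hAeq : {ω | τ ω = n + 1} = Y ⁻¹' (pwGood n) := by
    ext ω
    simp only [Set.mem_setOf_eq, Set.mem_preimage]
    constructor
    · intro h
      have hne : {m | 1 ≤ m ∧ S m ω = -1}.Nonempty := by
        by_contra h'
        rw [Set.not_nonempty_iff_eq_empty] at h'
        rw [hτ ω, h', Nat.sInf_empty] at h
        omega
      rw [hτ ω] at h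
      have hmem : (n + 1) ∈ {m | 1 ≤ m ∧ S m ω = -1} := by
        have := Nat.sInf_mem hne
        rw [h] at this
        exact this
      have hlow : ∀ m, 1 ≤ m → m ≤ n → S m ω ≠ -1 := by
        intro m h1 h2 habs
        have hle := Nat.sInf_le (show m ∈ {m | 1 ≤ m ∧ S m ω = -1} from ⟨h1, habs⟩)
        omega
      have hpos : ∀ m, m ≤ n → 0 ≤ S m ω := by
        intro m
        induction m with
        | zero => intro _; rw [hA0]
        | succ m ih =>
          intro hm
          have h0 := ih (by omega)
          have h1 := hstep ω m
          have h2 := hlow (m + 1) (by omega) hm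
          have h3 : (0 : ℤ) ≤ (X (m + 1) ω : ℤ) := Int.natCast_nonneg _
          omega
      constructor
      · intro m h1m hmn
        have := hpos m hmn
        rw [hSrel ω m (by omega)] at this
        omega
      · have hs := hmem.2
        rw [hSrel ω (n + 1) (le_refl _)] at hs
        omega
    · intro hg
      obtain ⟨hg1, hg2⟩ := hg
      have hSn1 : S (n + 1) ω = -1 := by
        rw [hSrel ω (n + 1) (le_refl _), hg2]
        push_cast
        ring
      rw [hτ ω]
      apply le_antisymm
      · exact Nat.sInf_le ⟨by omega, hSn1⟩
      · refine le_csInf ⟨n + 1, ⟨by omega, hSn1⟩⟩ ?_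
        intro m hm
        obtain ⟨h1m, hSm⟩ := hm
        by_contra hcon
        push_neg at hcon
        have := hg1 m h1m (by omega)
        rw [hSrel ω m (by omega)] at hSm
        omega
  -- the index tuple in `Fin (n+1)`
  set ι : Fin k → Fin (n + 1) := fun r => ⟨i r - 1, by
    have := hival r; omega⟩ with hιdef
  have hι1 : ∀ r, ((ι r : ℕ)) + 1 = i r := by
    intro r; simp only [hιdef]; have := hival r; omega
  have hιinj : Function.Injective ι := by
    intro r s hrs
    apply hinj
    have h1 := hι1 r; have h2 := hι1 s
    have h3 : (ι r : ℕ) = (ι s : ℕ) := by rw [hrs]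
    omega
  set Fr : Fin k → Finset (Fin (n + 1)) := fun r =>
    Finset.univ.filter (fun t : Fin (n + 1) => (t : ℕ) < i r) with hFrdef
  -- unfold the conditional measure
  rw [show ProbabilityTheory.cond μ {ω | τ ω = n + 1}
      = (μ {ω | τ ω = n + 1})⁻¹ • μ.restrict {ω | τ ω = n + 1} from rfl,
    lintegral_smul_measure, lintegral_smul_measure, smul_eq_mul, smul_eq_mul, mul_left_comm]
  apply mul_le_mul_right
  -- LHS integral
  have hintg : ∀ ω, (∏ r, (X (i r) ω : ENNReal)) = ((∏ r, (Y ω) (ι r) : ℕ) : ENNReal) := by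
    intro ω
    rw [Nat.cast_prod]
    apply Finset.prod_congr rfl
    intro r _
    congr 1
    simp only [hYdef]
    rw [hι1 r]
  have hL : (∫⁻ ω in {ω | τ ω = n + 1}, ∏ r, (X (i r) ω : ENNReal) ∂μ) = pwQ n k ι := by
    simp only [hintg]
    rw [hAeq, pw_setLintegral_pull μ n Y hYm hmap (fun x => ((∏ r, x (ι r) : ℕ) : ENNReal))]
    rfl
  -- RHS integrand
  have hRint : ∀ ω, (∏ r, ((S (i r) ω + i r).toNat : ENNReal))
      = ((∑ J ∈ Fintype.piFinset Fr, ∏ r, (Y ω) (J r) : ℕ) : ENNReal) := by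
    intro ω
    have h1 : ∀ r : Fin k, ((S (i r) ω + i r).toNat) = pwPsum n (i r) (Y ω) := by
      intro r
      rw [hSrel ω (i r) (by have := hival r; omega)]
      have h2 : (pwPsum n (i r) (Y ω) : ℤ) - (i r) + (i r) = (pwPsum n (i r) (Y ω) : ℤ) := by
        ring
      rw [h2, Int.toNat_natCast]
    calc ∏ r, ((S (i r) ω + i r).toNat : ENNReal)
        = ((∏ r, pwPsum n (i r) (Y ω) : ℕ) : ENNReal) := by
          rw [Nat.cast_prod]
          exact Finset.prod_congr rfl (fun r _ => by rw [h1 r])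
      _ = _ := by
          congr 1
          unfold pwPsum
          exact Finset.prod_univ_sum Fr (fun r t => (Y ω) t)
  have hR : (∫⁻ ω in {ω | τ ω = n + 1}, ∏ r, ((S (i r) ω + i r).toNat : ENNReal) ∂μ)
      = ∑ J ∈ Fintype.piFinset Fr, pwQ n k J := by
    simp only [hRint]
    rw [hAeq, pw_setLintegral_pull μ n Y hYm hmap
      (fun x => ((∑ J ∈ Fintype.piFinset Fr, ∏ r, x (J r) : ℕ) : ENNReal))]
    have hsplit : ∀ x : Fin (n + 1) → ℕ,
        (pwGood n).indicator
          (fun x => ((∑ J ∈ Fintype.piFinset Fr, ∏ r, x (J r) : ℕ) : ENNReal) * pwWgt n x) x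
        = ∑ J ∈ Fintype.piFinset Fr,
            (pwGood n).indicator (fun x => ((∏ r, x (J r) : ℕ) : ENNReal) * pwWgt n x) x := by
      intro x
      by_cases hx : x ∈ pwGood n
      · rw [Set.indicator_of_mem hx]
        rw [Finset.sum_congr rfl (fun J _ => Set.indicator_of_mem hx _)]
        rw [Nat.cast_sum, Finset.sum_mul]
      · rw [Set.indicator_of_notMem hx]
        rw [Finset.sum_congr rfl (fun J _ => Set.indicator_of_notMem hx _)]
        simp
    rw [tsum_congr hsplit, Summable.tsum_finsetSum (fun J _ => ENNReal.summable)]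
    rfl
  rw [hL, hR]
  have hcard : (Fintype.piFinset Fr).card = ∏ r, i r := by
    rw [Fintype.card_piFinset]
    exact Finset.prod_congr rfl (fun r _ => pw_card_filter n (i r) (by have := hival r; omega))
  have hconst : (∏ r, (i r : ENNReal)) * pwQ n k ι = ∑ _J ∈ Fintype.piFinset Fr, pwQ n k ι := by
    rw [Finset.sum_const, hcard, nsmul_eq_mul]
    congr 1
    rw [Nat.cast_prod]
  rw [hconst]
  apply Finset.sum_le_sum
  intro J hJ
  apply pwQ_mono n k ι J hιinj
  intro r
  have hJr : J r ∈ Fr r := Fintype.mem_piFinset.mp hJ r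
  simp only [hFrdef, Finset.mem_filter, Finset.mem_univ, true_and] at hJr
  have := hι1 r
  omega
end

section
/- Let X_1,...,X_n be i.i.d. Poisson(1), S_m = Σ_{j≤m}(X_j − 1), τ_{−1} the first hitting time of −1, and let f: ℕ × ℕ* → [0,∞) satisfy f(0,m) = 0 for all m. Then for indices 1 ≤ i_1 < ... < i_k ≤ n and 1 ≤ j_1 < ... < j_k ≤ n with j_r ≤ i_r for all r, and integers m_1,...,m_k ≥ 1: E[f(X_{i_1},m_1)⋯f(X_{i_k},m_k) · 1_{τ_{−1}=n+1}] ≤ E[f(X_{j_1},m_1)⋯f(X_{j_k},m_k) · 1_{τ_{−1}=n+1}]. -/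
open MeasureTheory ProbabilityTheory Finset
open scoped ENNReal

namespace CWSD

noncomputable section

/-- partial sums of the walk read off a sequence `y`. -/
def ps (y : ℕ → ℕ) (m : ℕ) : ℤ := ∑ u ∈ Finset.Icc 1 m, ((y u : ℤ) - 1)

lemma ps_zero (y : ℕ → ℕ) : ps y 0 = 0 := by simp [ps]

lemma ps_succ (y : ℕ → ℕ) (m : ℕ) : ps y (m + 1) = ps y m + ((y (m + 1) : ℤ) - 1) := by
  unfold ps
  rw [Finset.sum_Icc_succ_top (by omega)]

/-- the event `τ = n+1` in terms of the sequence. -/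
def ok (n : ℕ) (y : ℕ → ℕ) : Prop :=
  (∀ m ∈ Finset.Icc 1 n, ps y m ≠ -1) ∧ ps y (n + 1) = -1

instance (n : ℕ) : DecidablePred (ok n) := fun _ => by unfold ok; infer_instance

def chi (n : ℕ) (y : ℕ → ℕ) : ℝ≥0∞ := if ok n y then 1 else 0

def F (k : ℕ) (f : ℕ → ℕ → ℝ) (m : Fin k → ℕ) (i : Fin k → ℕ) (y : ℕ → ℕ) : ℝ≥0∞ :=
  ENNReal.ofReal (∏ r, f (y (i r)) (m r))

def W (n : ℕ) (p : ℕ → ℝ≥0∞) (y : ℕ → ℕ) : ℝ≥0∞ := ∏ u ∈ Finset.range (n + 2), p (y u)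

def ext (n : ℕ) (v : Fin (n + 2) → ℕ) : ℕ → ℕ := fun u => if h : u < n + 2 then v ⟨u, h⟩ else 0

lemma ps_nonneg {n : ℕ} {y : ℕ → ℕ} (h : ∀ m' ∈ Finset.Icc 1 n, ps y m' ≠ -1) :
    ∀ m, m ≤ n → 0 ≤ ps y m := by
  intro m
  induction m with
  | zero => intro _; simp [ps_zero]
  | succ m ih =>
    intro hm
    have h1 : 0 ≤ ps y m := ih (by omega)
    have h2 : ps y (m + 1) ≠ -1 := h _ (by simp only [Finset.mem_Icc]; omega)
    have h3 := ps_succ y m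
    have h4 : (0 : ℤ) ≤ (y (m + 1) : ℤ) := Int.ofNat_nonneg _
    omega

lemma ps_comp_swap {a : ℕ} (ha : 2 ≤ a) (y : ℕ → ℕ) (m : ℕ) (hm : m ≠ a - 1) :
    ps (y ∘ Equiv.swap (a - 1) a) m = ps y m := by
  unfold ps
  rcases lt_or_ge m (a - 1) with h | h
  · apply Finset.sum_congr rfl
    intro u hu
    simp only [Finset.mem_Icc] at hu
    have h1 : u ≠ a - 1 := by omega
    have h2 : u ≠ a := by omega
    simp [Function.comp, Equiv.swap_apply_of_ne_of_ne h1 h2]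
  · have hma : a ≤ m := by omega
    refine Finset.sum_equiv (Equiv.swap (a - 1) a) ?_ ?_
    · intro u
      simp only [Finset.mem_Icc]
      rcases eq_or_ne u (a - 1) with rfl | h1
      · rw [Equiv.swap_apply_left]; omega
      rcases eq_or_ne u a with rfl | h2
      · rw [Equiv.swap_apply_right]; omega
      · rw [Equiv.swap_apply_of_ne_of_ne h1 h2]
    · intro u _; rfl

lemma W_comp_swap {n a : ℕ} (ha : 2 ≤ a) (han : a ≤ n + 1) (p : ℕ → ℝ≥0∞) (y : ℕ → ℕ) :
    W n p (y ∘ Equiv.swap (a - 1) a) = W n p y := by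
  unfold W
  refine Finset.prod_equiv (Equiv.swap (a - 1) a) ?_ ?_
  · intro u
    simp only [Finset.mem_range]
    rcases eq_or_ne u (a - 1) with rfl | h1
    · rw [Equiv.swap_apply_left]; omega
    rcases eq_or_ne u a with rfl | h2
    · rw [Equiv.swap_apply_right]; omega
    · rw [Equiv.swap_apply_of_ne_of_ne h1 h2]
  · intro u _; rfl

lemma step {n k : ℕ} (p : ℕ → ℝ≥0∞) (f : ℕ → ℕ → ℝ) (m : Fin k → ℕ)
    (hf0 : ∀ m', 1 ≤ m' → f 0 m' = 0) (hm : ∀ r, 1 ≤ m r)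
    (i : Fin k → ℕ) (r0 : Fin k) (ha2 : 2 ≤ i r0) (han : i r0 ≤ n)
    (hne : ∀ r, r ≠ r0 → i r ≠ i r0 - 1 ∧ i r ≠ i r0) :
    ∑' v : Fin (n + 2) → ℕ, W n p (ext n v) * (chi n (ext n v) * F k f m i (ext n v)) ≤
      ∑' v : Fin (n + 2) → ℕ, W n p (ext n v) *
        (chi n (ext n v) * F k f m (Function.update i r0 (i r0 - 1)) (ext n v)) := by
  set a := i r0 with hadef
  set σ : Equiv.Perm ℕ := Equiv.swap (a - 1) a with hσ
  have hlt : ∀ t : ℕ, t < n + 2 → σ t < n + 2 := by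
    intro t ht
    rcases eq_or_ne t (a - 1) with rfl | h1
    · rw [hσ, Equiv.swap_apply_left]; omega
    rcases eq_or_ne t a with rfl | h2
    · rw [hσ, Equiv.swap_apply_right]; omega
    · rw [hσ, Equiv.swap_apply_of_ne_of_ne h1 h2]; exact ht
  set E : (Fin (n + 2) → ℕ) ≃ (Fin (n + 2) → ℕ) :=
    { toFun := fun v t => v ⟨σ t.1, hlt t.1 t.2⟩
      invFun := fun v t => v ⟨σ t.1, hlt t.1 t.2⟩
      left_inv := by
        intro v; funext t
        simp only []
        congr 1
        ext
        simp [hσ, Equiv.swap_apply_self]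
      right_inv := by
        intro v; funext t
        simp only []
        congr 1
        ext
        simp [hσ, Equiv.swap_apply_self] } with hE
  have hext : ∀ v : Fin (n + 2) → ℕ, ext n (E v) = ext n v ∘ σ := by
    intro v; funext u
    by_cases h : u < n + 2
    · simp only [ext, Function.comp_apply, dif_pos h, dif_pos (hlt u h), hE, Equiv.coe_fn_mk]
    · have h1 : u ≠ a - 1 := by omega
      have h2 : u ≠ a := by omega
      have hσu : σ u = u := by rw [hσ, Equiv.swap_apply_of_ne_of_ne h1 h2]
      simp only [ext, Function.comp_apply, dif_neg h, hσu]
  have hrw : ∑' v : Fin (n + 2) → ℕ, W n p (ext n v) * (chi n (ext n v) * F k f m i (ext n v))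
      = ∑' v : Fin (n + 2) → ℕ,
          W n p (ext n (E v)) * (chi n (ext n (E v)) * F k f m i (ext n (E v))) :=
    (Equiv.tsum_eq E _).symm
  rw [hrw]
  refine ENNReal.tsum_le_tsum fun v => ?_
  rw [hext v]
  set y := ext n v with hy
  set i' := Function.update i r0 (a - 1) with hi'
  have hW : W n p (y ∘ σ) = W n p y := W_comp_swap ha2 (by omega) p y
  have hF : F k f m i (y ∘ σ) = F k f m i' y := by
    unfold F
    congr 1
    apply Finset.prod_congr rfl
    intro r _
    rcases eq_or_ne r r0 with rfl | hr
    · rw [hi', Function.update_self, Function.comp_apply, hσ, Equiv.swap_apply_right]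
    · rw [hi', Function.update_of_ne hr, Function.comp_apply, hσ,
        Equiv.swap_apply_of_ne_of_ne (hne r hr).1 (hne r hr).2]
  have hchi : chi n (y ∘ σ) * F k f m i' y ≤ chi n y * F k f m i' y := by
    unfold chi
    by_cases h1 : ok n (y ∘ σ)
    · by_cases h2 : ok n y
      · simp [h1, h2]
      · have hya : y (a - 1) = 0 := by
          obtain ⟨h1a, h1b⟩ := h1
          have hn1 : ps y (n + 1) = -1 := by
            rw [← ps_comp_swap ha2 y (n + 1) (by omega), ← hσ]; exact h1b
          have hbad : ¬ ∀ m' ∈ Finset.Icc 1 n, ps y m' ≠ -1 := by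
            intro hc; exact h2 ⟨hc, hn1⟩
          push_neg at hbad
          obtain ⟨m1, hm1, hm1v⟩ := hbad
          have hm1a : m1 = a - 1 := by
            by_contra hne'
            apply h1a m1 hm1
            rw [hσ, ps_comp_swap ha2 y m1 hne']; exact hm1v
          subst hm1a
          have hge : 0 ≤ ps y (a - 2) := by
            by_cases h22 : a = 2
            · rw [show a - 2 = 0 by omega, ps_zero]
            · have hne2 : a - 2 ≠ a - 1 := by omega
              rw [← ps_comp_swap ha2 y (a - 2) hne2, ← hσ]
              exact ps_nonneg h1a (a - 2) (by omega)
          have hrec : ps y (a - 1) = ps y (a - 2) + ((y (a - 1) : ℤ) - 1) := by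
            have h5 := ps_succ y (a - 2)
            rwa [show a - 2 + 1 = a - 1 by omega] at h5
          have hy0 : (y (a - 1) : ℤ) = 0 := by
            have h6 : (0 : ℤ) ≤ (y (a - 1) : ℤ) := Int.ofNat_nonneg _
            omega
          exact_mod_cast hy0
        have hFz : F k f m i' y = 0 := by
          unfold F
          have h7 : (∏ r, f (y (i' r)) (m r)) = 0 := by
            apply Finset.prod_eq_zero (Finset.mem_univ r0)
            rw [hi', Function.update_self, hya, hf0 _ (hm r0)]
          rw [h7, ENNReal.ofReal_zero]
        rw [hFz]
        simp
    · simp [h1]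
  calc W n p (y ∘ σ) * (chi n (y ∘ σ) * F k f m i (y ∘ σ))
      = W n p y * (chi n (y ∘ σ) * F k f m i' y) := by rw [hW, hF]
    _ ≤ W n p y * (chi n y * F k f m i' y) := mul_le_mul_right hchi _

lemma main {n k : ℕ} (p : ℕ → ℝ≥0∞) (f : ℕ → ℕ → ℝ) (m : Fin k → ℕ)
    (hf0 : ∀ m', 1 ≤ m' → f 0 m' = 0) (hm : ∀ r, 1 ≤ m r) :
    ∀ (d : ℕ) (i j : Fin k → ℕ), (∑ r, (i r - j r)) = d →
      StrictMono i → StrictMono j →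
      (∀ r, i r ∈ Finset.Icc 1 n) → (∀ r, j r ∈ Finset.Icc 1 n) → (∀ r, j r ≤ i r) →
      ∑' v : Fin (n + 2) → ℕ, W n p (ext n v) * (chi n (ext n v) * F k f m i (ext n v)) ≤
        ∑' v : Fin (n + 2) → ℕ, W n p (ext n v) * (chi n (ext n v) * F k f m j (ext n v)) := by
  intro d
  induction d using Nat.strong_induction_on with
  | _ d IH =>
    intro i j hd hi hj hir hjr hji
    by_cases hij : ∀ r, i r = j r
    · rw [funext hij]
    · push_neg at hij
      have hne : (Finset.univ.filter (fun r => j r < i r)).Nonempty := by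
        obtain ⟨r, hr⟩ := hij
        refine ⟨r, ?_⟩
        simp only [Finset.mem_filter, Finset.mem_univ, true_and]
        exact lt_of_le_of_ne (hji r) (Ne.symm hr)
      set r0 := (Finset.univ.filter (fun r => j r < i r)).min' hne with hr0def
      have hr0mem : j r0 < i r0 := by
        have := Finset.min'_mem _ hne
        simpa using this
      have hmin : ∀ r, j r < i r → r0 ≤ r := by
        intro r hr
        exact Finset.min'_le _ _ (by simpa using hr)
      have heq : ∀ r, r < r0 → i r = j r := by
        intro r hr
        by_contra hc
        have h1 : j r < i r := lt_of_le_of_ne (hji r) (Ne.symm hc)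
        exact absurd (hmin r h1) (not_le.mpr hr)
      have ha2 : 2 ≤ i r0 := by
        have h1 := hjr r0
        simp only [Finset.mem_Icc] at h1
        omega
      have han : i r0 ≤ n := by
        have h1 := hir r0
        simp only [Finset.mem_Icc] at h1
        exact h1.2
      have hjr0 : j r0 ≤ i r0 - 1 := by omega
      have hne' : ∀ r, r ≠ r0 → i r ≠ i r0 - 1 ∧ i r ≠ i r0 := by
        intro r hr
        rcases lt_or_gt_of_ne hr with h | h
        · have h1 : i r = j r := heq r h
          have h2 : j r < j r0 := hj h
          constructor <;> omega
        · have h3 := hi h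
          constructor <;> omega
      set i' := Function.update i r0 (i r0 - 1) with hi'def
      have hival : ∀ r, i' r = if r = r0 then i r0 - 1 else i r := by
        intro r
        by_cases h : r = r0
        · rw [hi'def, h, Function.update_self, if_pos rfl]
        · rw [hi'def, Function.update_of_ne h, if_neg h]
      have hstep := step p f m hf0 hm i r0 ha2 han hne'
      have hmono' : StrictMono i' := by
        intro r1 r2 h12
        rw [hival, hival]
        by_cases h1 : r1 = r0 <;> by_cases h2 : r2 = r0
        · exact absurd (h1.trans h2.symm) (ne_of_lt h12)
        · rw [if_pos h1, if_neg h2]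
          have : i r0 < i r2 := hi (h1 ▸ h12)
          omega
        · rw [if_neg h1, if_pos h2]
          have h3 : r1 < r0 := h2 ▸ h12
          have h4 : i r1 = j r1 := heq r1 h3
          have h5 : j r1 < j r0 := hj h3
          omega
        · rw [if_neg h1, if_neg h2]
          exact hi h12
      have hrange' : ∀ r, i' r ∈ Finset.Icc 1 n := by
        intro r
        rw [hival]
        by_cases h : r = r0
        · rw [if_pos h]
          simp only [Finset.mem_Icc]
          omega
        · rw [if_neg h]; exact hir r
      have hji' : ∀ r, j r ≤ i' r := by
        intro r
        rw [hival]
        by_cases h : r = r0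
        · rw [if_pos h, h]; exact hjr0
        · rw [if_neg h]; exact hji r
      have hlt : (∑ r, (i' r - j r)) < d := by
        have e1 : ∑ r ∈ Finset.univ.erase r0, (i' r - j r)
            = ∑ r ∈ Finset.univ.erase r0, (i r - j r) := by
          apply Finset.sum_congr rfl
          intro r hr
          rw [hival, if_neg (Finset.ne_of_mem_erase hr)]
        have e2 := Finset.add_sum_erase Finset.univ (fun r => (i' r - j r)) (Finset.mem_univ r0)
        have e3 := Finset.add_sum_erase Finset.univ (fun r => (i r - j r)) (Finset.mem_univ r0)
        have e4 : i' r0 = i r0 - 1 := by rw [hival, if_pos rfl]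
        omega
      exact le_trans hstep (IH _ hlt i' j rfl hmono' hj hrange' hjr hji')

end

end CWSD

/-- Monotonicity of products along the Poisson walk conditioned to hit `−1` at time
`n+1`: if `f(0, m) = 0`, `i_1 < … < i_k`, `j_1 < … < j_k` with `j_r ≤ i_r`, and
`m_r ≥ 1`, then
`E[f(X_{i_1},m_1) ⋯ f(X_{i_k},m_k) 1_{τ_{−1}=n+1}] ≤
 E[f(X_{j_1},m_1) ⋯ f(X_{j_k},m_k) 1_{τ_{−1}=n+1}]`
(expectations written as lower Lebesgue integrals of the nonnegative integrands). -/
theorem conditioned_walk_step_decrease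
    {Ω : Type*} [MeasurableSpace Ω] (μ : Measure Ω) [IsProbabilityMeasure μ]
    (X : ℕ → Ω → ℕ) (hmeas : ∀ i, Measurable (X i))
    (hindep : iIndepFun X μ)
    (hdist : ∀ i, Measure.map (X i) μ = poissonMeasure 1)
    (S : ℕ → Ω → ℤ) (hS : ∀ m ω, S m ω = ∑ j ∈ Finset.Icc 1 m, ((X j ω : ℤ) - 1))
    (τ : Ω → ℕ) (hτ : ∀ ω, τ ω = sInf {m | 1 ≤ m ∧ S m ω = -1})
    (f : ℕ → ℕ → ℝ) (hf0 : ∀ m, 1 ≤ m → f 0 m = 0) (hfpos : ∀ x m, 0 ≤ f x m)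
    (n k : ℕ) (hn : 1 ≤ n) (hk : 1 ≤ k)
    (i j : Fin k → ℕ) (hi_mono : StrictMono i) (hj_mono : StrictMono j)
    (hi_range : ∀ r, i r ∈ Finset.Icc 1 n) (hj_range : ∀ r, j r ∈ Finset.Icc 1 n)
    (hji : ∀ r, j r ≤ i r)
    (m : Fin k → ℕ) (hm : ∀ r, 1 ≤ m r) :
    ∫⁻ ω in {ω | τ ω = n + 1}, ENNReal.ofReal (∏ r, f (X (i r) ω) (m r)) ∂μ ≤
      ∫⁻ ω in {ω | τ ω = n + 1}, ENNReal.ofReal (∏ r, f (X (j r) ω) (m r)) ∂μ := by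
  classical
  set p : ℕ → ℝ≥0∞ := fun y => poissonMeasure 1 {y} with hp
  set Z : Ω → (Fin (n + 2) → ℕ) := fun ω t => X t.1 ω with hZ
  have hZmeas : Measurable Z := measurable_pi_lambda _ (fun t => hmeas t.1)
  have hev : ∀ ω, (τ ω = n + 1) ↔ CWSD.ok n (CWSD.ext n (Z ω)) := by
    intro ω
    have hps : ∀ mm, mm ≤ n + 1 → CWSD.ps (CWSD.ext n (Z ω)) mm = S mm ω := by
      intro mm hmm
      rw [hS]
      unfold CWSD.ps
      apply Finset.sum_congr rfl
      intro u hu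
      simp only [Finset.mem_Icc] at hu
      have h1 : u < n + 2 := by omega
      simp [CWSD.ext, h1, hZ]
    rw [hτ ω]
    constructor
    · intro h
      have hne : {m' | 1 ≤ m' ∧ S m' ω = -1}.Nonempty := by
        by_contra hc
        rw [Set.not_nonempty_iff_eq_empty] at hc
        rw [hc, Nat.sInf_empty] at h
        omega
      have hmem := Nat.sInf_mem hne
      rw [h] at hmem
      constructor
      · intro mm hmm
        simp only [Finset.mem_Icc] at hmm
        rw [hps mm (by omega)]
        intro hc
        have h2 : mm ∈ {m' | 1 ≤ m' ∧ S m' ω = -1} := ⟨hmm.1, hc⟩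
        have h3 := Nat.sInf_le h2
        omega
      · rw [hps (n + 1) le_rfl]; exact hmem.2
    · rintro ⟨h1, h2⟩
      have hmem : (n + 1) ∈ {m' | 1 ≤ m' ∧ S m' ω = -1} :=
        ⟨by omega, by rw [← hps (n + 1) le_rfl]; exact h2⟩
      have hle := Nat.sInf_le hmem
      by_contra hc
      have hlt : sInf {m' | 1 ≤ m' ∧ S m' ω = -1} < n + 1 := lt_of_le_of_ne hle hc
      have hmem2 := Nat.sInf_mem ⟨_, hmem⟩
      have h4 := h1 (sInf {m' | 1 ≤ m' ∧ S m' ω = -1})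
        (Finset.mem_Icc.2 ⟨hmem2.1, by omega⟩)
      rw [hps _ (by omega)] at h4
      exact h4 hmem2.2
  have key : ∀ (ii : Fin k → ℕ), (∀ r, ii r ∈ Finset.Icc 1 n) →
      ∫⁻ ω in {ω | τ ω = n + 1}, ENNReal.ofReal (∏ r, f (X (ii r) ω) (m r)) ∂μ
        = ∑' v : Fin (n + 2) → ℕ,
            CWSD.W n p (CWSD.ext n v) *
              (CWSD.chi n (CWSD.ext n v) * CWSD.F k f m ii (CWSD.ext n v)) := by
    intro ii hii
    set G : (Fin (n + 2) → ℕ) → ℝ≥0∞ :=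
      fun v => CWSD.chi n (CWSD.ext n v) * CWSD.F k f m ii (CWSD.ext n v) with hG
    have hGmeas : Measurable G := measurable_of_countable G
    have hAset : {ω | τ ω = n + 1} = Z ⁻¹' {v | CWSD.ok n (CWSD.ext n v)} := by
      ext ω; exact hev ω
    have hVmeas : MeasurableSet {v : Fin (n + 2) → ℕ | CWSD.ok n (CWSD.ext n v)} :=
      (Set.to_countable _).measurableSet
    have h1 : ∫⁻ ω in {ω | τ ω = n + 1}, ENNReal.ofReal (∏ r, f (X (ii r) ω) (m r)) ∂μ
        = ∫⁻ ω, G (Z ω) ∂μ := by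
      rw [hAset, ← lintegral_indicator (hZmeas hVmeas)]
      apply lintegral_congr
      intro ω
      have hextX : ∀ r : Fin k, CWSD.ext n (Z ω) (ii r) = X (ii r) ω := by
        intro r
        have h2 := hii r
        simp only [Finset.mem_Icc] at h2
        have h3 : ii r < n + 2 := by omega
        simp [CWSD.ext, h3, hZ]
      by_cases h : CWSD.ok n (CWSD.ext n (Z ω))
      · rw [Set.indicator_of_mem (by exact h)]
        simp [hG, CWSD.chi, CWSD.F, h, hextX]
      · rw [Set.indicator_of_notMem (by exact h)]
        simp [hG, CWSD.chi, h]
    have h2 : ∫⁻ ω, G (Z ω) ∂μ = ∫⁻ v, G v ∂(Measure.map Z μ) :=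
      (lintegral_map hGmeas hZmeas).symm
    have h3 : ∫⁻ v, G v ∂(Measure.map Z μ) = ∑' v, G v * (Measure.map Z μ) {v} :=
      lintegral_countable' G
    have h4 : ∀ v : Fin (n + 2) → ℕ,
        (Measure.map Z μ) {v} = CWSD.W n p (CWSD.ext n v) := by
      intro v
      rw [Measure.map_apply hZmeas (MeasurableSet.singleton v)]
      have hset : Z ⁻¹' {v} = ⋂ u ∈ Finset.range (n + 2), X u ⁻¹' {CWSD.ext n v u} := by
        ext ω
        simp only [Set.mem_preimage, Set.mem_singleton_iff, Set.mem_iInter, funext_iff]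
        constructor
        · intro h u hu
          simp only [Finset.mem_range] at hu
          have := h ⟨u, hu⟩
          simpa [CWSD.ext, hu, hZ] using this.symm ▸ rfl
        · intro h t
          have := h t.1 (Finset.mem_range.2 t.2)
          simpa [CWSD.ext, t.2, hZ] using this
      rw [hset, hindep.measure_inter_preimage_eq_mul (Finset.range (n + 2))
        (fun u _ => MeasurableSet.singleton _)]
      unfold CWSD.W
      apply Finset.prod_congr rfl
      intro u _
      rw [← Measure.map_apply (hmeas u) (MeasurableSet.singleton _), hdist u]
    rw [h1, h2, h3]
    apply tsum_congr
    intro v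
    rw [h4 v, mul_comm]
  rw [key i hi_range, key j hj_range]
  exact CWSD.main p f m hf0 hm (∑ r, (i r - j r)) i j rfl hi_mono hj_mono hi_range hj_range hji
end
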